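/- arXiv:2403.05072 — 4 statements merged into one kernel-verified Lean document; each statement's English description precedes it below -/
import Mathlib

section
/- For any positive integer n and any partition λ of n, the sum over all cells u of the Young diagram of λ of the square of the hook length of u equals n² plus the sum over all cells u of the square of the content of u; that is, Σ_{u∈λ} h(u)² = n² + Σ_{u∈λ} c(u)². -/
open Finset

/-- A Young diagram: a finite set of cells `(i, j)` with 1-based coordinates,
closed under decreasing either coordinate (down to 1).  Its rows are the
intervals `[1, λ_i]` for a weakly decreasing sequence `λ`. -/
def IsYoung (Y : Finset (ℕ × ℕ)) : Prop :=
  (∀ p ∈ Y, 1 ≤ p.1 ∧ 1 ≤ p.2) ∧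
    ∀ p ∈ Y, ∀ q : ℕ × ℕ, 1 ≤ q.1 → 1 ≤ q.2 → q.1 ≤ p.1 → q.2 ≤ p.2 → q ∈ Y

/-- `row Y i = λ_i`, the length of the `i`-th row. -/
def row (Y : Finset (ℕ × ℕ)) (i : ℕ) : ℕ := (Y.filter fun p => p.1 = i).card

/-- `col Y j = λ'_j`, the length of the `j`-th column (conjugate partition). -/
def col (Y : Finset (ℕ × ℕ)) (j : ℕ) : ℕ := (Y.filter fun p => p.2 = j).card

/-- Hook length `h(u) = λ_i + λ'_j - i - j + 1` of the cell `u = (i, j)`. -/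
def hk (Y : Finset (ℕ × ℕ)) (u : ℕ × ℕ) : ℤ :=
  (row Y u.1 : ℤ) + (col Y u.2 : ℤ) - u.1 - u.2 + 1

/-- Content `c(u) = j - i` of the cell `u = (i, j)`. -/
def ct (u : ℕ × ℕ) : ℤ := (u.2 : ℤ) - (u.1 : ℤ)

namespace SumHookAux

lemma interval_eq (S : Finset ℕ) (h1 : ∀ a ∈ S, 1 ≤ a)
    (hdc : ∀ a ∈ S, ∀ b, 1 ≤ b → b ≤ a → b ∈ S) : S = Finset.Icc 1 S.card := by
  have hsub : S ⊆ Finset.Icc 1 S.card := by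
    intro a ha
    rw [Finset.mem_Icc]
    refine ⟨h1 a ha, ?_⟩
    have h2 : Finset.Icc 1 a ⊆ S := by
      intro b hb
      rw [Finset.mem_Icc] at hb
      exact hdc a ha b hb.1 hb.2
    have := Finset.card_le_card h2
    simpa using this
  exact Finset.eq_of_subset_of_card_le hsub (by simp)

variable {Y : Finset (ℕ × ℕ)}

lemma mem_row_iff (hY : IsYoung Y) (i j : ℕ) :
    (i, j) ∈ Y ↔ 1 ≤ j ∧ j ≤ row Y i := by
  classical
  set S : Finset ℕ := (Y.filter fun p => p.1 = i).image Prod.snd with hS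
  have hmem : ∀ k, (i, k) ∈ Y ↔ k ∈ S := by
    intro k
    simp only [hS, Finset.mem_image, Finset.mem_filter]
    constructor
    · exact fun h => ⟨(i, k), ⟨h, rfl⟩, rfl⟩
    · rintro ⟨⟨p1, p2⟩, ⟨hp, h1⟩, h2⟩
      simp only at h1 h2
      subst h1; subst h2; exact hp
  have hcard : S.card = row Y i := by
    have hinj : Set.InjOn Prod.snd ((Y.filter fun p => p.1 = i : Finset (ℕ × ℕ)) : Set (ℕ × ℕ)) := by
      intro p hp q hq hpq
      simp only [Finset.coe_filter, Set.mem_setOf_eq] at hp hq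
      exact Prod.ext (hp.2.trans hq.2.symm) hpq
    rw [hS, Finset.card_image_of_injOn hinj]; rfl
  have hint : S = Finset.Icc 1 S.card := by
    apply interval_eq
    · intro a ha; exact (hY.1 _ ((hmem a).mpr ha)).2
    · intro a ha b hb1 hba
      have hia : (i, a) ∈ Y := (hmem a).mpr ha
      exact (hmem b).mp (hY.2 _ hia (i, b) (hY.1 _ hia).1 hb1 le_rfl hba)
  rw [hmem, hint, hcard, Finset.mem_Icc]

lemma mem_col_iff (hY : IsYoung Y) (i j : ℕ) :
    (i, j) ∈ Y ↔ 1 ≤ i ∧ i ≤ col Y j := by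
  classical
  set S : Finset ℕ := (Y.filter fun p => p.2 = j).image Prod.fst with hS
  have hmem : ∀ k, (k, j) ∈ Y ↔ k ∈ S := by
    intro k
    simp only [hS, Finset.mem_image, Finset.mem_filter]
    constructor
    · exact fun h => ⟨(k, j), ⟨h, rfl⟩, rfl⟩
    · rintro ⟨⟨p1, p2⟩, ⟨hp, h1⟩, h2⟩
      simp only at h1 h2
      subst h1; subst h2; exact hp
  have hcard : S.card = col Y j := by
    have hinj : Set.InjOn Prod.fst ((Y.filter fun p => p.2 = j : Finset (ℕ × ℕ)) : Set (ℕ × ℕ)) := by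
      intro p hp q hq hpq
      simp only [Finset.coe_filter, Set.mem_setOf_eq] at hp hq
      exact Prod.ext hpq (hp.2.trans hq.2.symm)
    rw [hS, Finset.card_image_of_injOn hinj]; rfl
  have hint : S = Finset.Icc 1 S.card := by
    apply interval_eq
    · intro a ha; exact (hY.1 _ ((hmem a).mpr ha)).1
    · intro a ha b hb1 hba
      have hia : (a, j) ∈ Y := (hmem a).mpr ha
      exact (hmem b).mp (hY.2 _ hia (b, j) hb1 (hY.1 _ hia).2 hba le_rfl)
  rw [hmem, hint, hcard, Finset.mem_Icc]


lemma card_row_seg (hY : IsYoung Y) (i : ℕ) (Q : ℕ → Prop) [DecidablePred Q] :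
    (Y.filter fun q => q.1 = i ∧ Q q.2).card = ((Finset.Icc 1 (row Y i)).filter Q).card := by
  classical
  have himg : Y.filter (fun q => q.1 = i ∧ Q q.2)
      = ((Finset.Icc 1 (row Y i)).filter Q).image (fun j => (i, j)) := by
    ext ⟨a, b⟩
    simp only [Finset.mem_filter, Finset.mem_image, Finset.mem_Icc, Prod.mk.injEq]
    constructor
    · rintro ⟨hmem, rfl, hq⟩
      exact ⟨b, ⟨(mem_row_iff hY a b).mp hmem, hq⟩, rfl, rfl⟩
    · rintro ⟨j, ⟨hj, hQ⟩, rfl, rfl⟩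
      exact ⟨(mem_row_iff hY i j).mpr hj, rfl, hQ⟩
  rw [himg, Finset.card_image_of_injective _ (fun x y h => by simpa using h)]

lemma card_col_seg (hY : IsYoung Y) (j : ℕ) (Q : ℕ → Prop) [DecidablePred Q] :
    (Y.filter fun q => q.2 = j ∧ Q q.1).card = ((Finset.Icc 1 (col Y j)).filter Q).card := by
  classical
  have himg : Y.filter (fun q => q.2 = j ∧ Q q.1)
      = ((Finset.Icc 1 (col Y j)).filter Q).image (fun i => (i, j)) := by
    ext ⟨a, b⟩
    simp only [Finset.mem_filter, Finset.mem_image, Finset.mem_Icc, Prod.mk.injEq]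
    constructor
    · rintro ⟨hmem, rfl, hq⟩
      exact ⟨a, ⟨(mem_col_iff hY a b).mp hmem, hq⟩, rfl, rfl⟩
    · rintro ⟨k, ⟨hk, hQ⟩, rfl, rfl⟩
      exact ⟨(mem_col_iff hY k j).mpr hk, rfl, hQ⟩
  rw [himg, Finset.card_image_of_injective _ (fun x y h => by simpa using h)]

lemma card_arm (hY : IsYoung Y) {p : ℕ × ℕ} (hp : p ∈ Y) :
    (Y.filter fun q => q.1 = p.1 ∧ p.2 < q.2).card = row Y p.1 - p.2 := by
  rw [card_row_seg hY p.1 (fun j => p.2 < j)]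
  have : (Finset.Icc 1 (row Y p.1)).filter (fun j => p.2 < j) = Finset.Ioc p.2 (row Y p.1) := by
    ext x; simp only [Finset.mem_filter, Finset.mem_Icc, Finset.mem_Ioc]; omega
  rw [this, Nat.card_Ioc]

lemma card_leg (hY : IsYoung Y) {p : ℕ × ℕ} (hp : p ∈ Y) :
    (Y.filter fun q => q.2 = p.2 ∧ p.1 < q.1).card = col Y p.2 - p.1 := by
  rw [card_col_seg hY p.2 (fun i => p.1 < i)]
  have : (Finset.Icc 1 (col Y p.2)).filter (fun i => p.1 < i) = Finset.Ioc p.1 (col Y p.2) := by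
    ext x; simp only [Finset.mem_filter, Finset.mem_Icc, Finset.mem_Ioc]; omega
  rw [this, Nat.card_Ioc]

lemma card_colm (hY : IsYoung Y) {p : ℕ × ℕ} (hp : p ∈ Y) :
    (Y.filter fun q => q.2 = p.2 ∧ q.1 ≠ p.1).card = col Y p.2 - 1 := by
  rw [card_col_seg hY p.2 (fun i => i ≠ p.1)]
  have hp1 : 1 ≤ p.1 ∧ p.1 ≤ col Y p.2 := by
    have := (mem_col_iff hY p.1 p.2).mp (by simpa using hp)
    exact this
  have : (Finset.Icc 1 (col Y p.2)).filter (fun i => i ≠ p.1)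
      = (Finset.Icc 1 (col Y p.2)).erase p.1 := by
    ext x; simp only [Finset.mem_filter, Finset.mem_erase]; tauto
  rw [this, Finset.card_erase_of_mem (Finset.mem_Icc.mpr hp1), Nat.card_Icc]
  omega

lemma filter_rect (hY : IsYoung Y) {p : ℕ × ℕ} (hp : p ∈ Y) :
    Y.filter (fun q => q.1 < p.1 ∧ q.2 < p.2) = (Finset.Ico 1 p.1) ×ˢ (Finset.Ico 1 p.2) := by
  ext q
  simp only [Finset.mem_filter, Finset.mem_product, Finset.mem_Ico]
  constructor
  · rintro ⟨hq, h1, h2⟩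
    exact ⟨⟨(hY.1 q hq).1, h1⟩, (hY.1 q hq).2, h2⟩
  · rintro ⟨⟨ha1, ha2⟩, hb1, hb2⟩
    exact ⟨hY.2 p hp q ha1 hb1 (le_of_lt ha2) (le_of_lt hb2), ha2, hb2⟩

lemma card_rect (hY : IsYoung Y) {p : ℕ × ℕ} (hp : p ∈ Y) :
    (Y.filter fun q => q.1 < p.1 ∧ q.2 < p.2).card = (p.1 - 1) * (p.2 - 1) := by
  rw [filter_rect hY hp, Finset.card_product, Nat.card_Ico, Nat.card_Ico]


lemma sum_reflect_row (hY : IsYoung Y) (g : ℕ → ℤ) :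
    ∑ u ∈ Y, g (row Y u.1 - u.2) = ∑ u ∈ Y, g (u.2 - 1) := by
  apply Finset.sum_nbij' (i := fun u => (u.1, row Y u.1 + 1 - u.2))
    (j := fun u => (u.1, row Y u.1 + 1 - u.2))
  · intro u hu
    have h := (mem_row_iff hY u.1 u.2).mp (by simpa using hu)
    exact (mem_row_iff hY u.1 _).mpr (by omega)
  · intro u hu
    have h := (mem_row_iff hY u.1 u.2).mp (by simpa using hu)
    exact (mem_row_iff hY u.1 _).mpr (by omega)
  · intro u hu
    have h := (mem_row_iff hY u.1 u.2).mp (by simpa using hu)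
    have : u = (u.1, u.2) := rfl
    rw [this]
    simp only [Prod.mk.injEq]
    exact ⟨trivial, by omega⟩
  · intro u hu
    have h := (mem_row_iff hY u.1 u.2).mp (by simpa using hu)
    have : u = (u.1, u.2) := rfl
    rw [this]
    simp only [Prod.mk.injEq]
    exact ⟨trivial, by omega⟩
  · intro u hu
    have h := (mem_row_iff hY u.1 u.2).mp (by simpa using hu)
    have : row Y u.1 + 1 - u.2 - 1 = row Y u.1 - u.2 := by omega
    simp only [this]

lemma sum_reflect_col (hY : IsYoung Y) (g : ℕ → ℤ) :
    ∑ u ∈ Y, g (col Y u.2 - u.1) = ∑ u ∈ Y, g (u.1 - 1) := by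
  apply Finset.sum_nbij' (i := fun u => (col Y u.2 + 1 - u.1, u.2))
    (j := fun u => (col Y u.2 + 1 - u.1, u.2))
  · intro u hu
    have h := (mem_col_iff hY u.1 u.2).mp (by simpa using hu)
    exact (mem_col_iff hY _ u.2).mpr (by omega)
  · intro u hu
    have h := (mem_col_iff hY u.1 u.2).mp (by simpa using hu)
    exact (mem_col_iff hY _ u.2).mpr (by omega)
  · intro u hu
    have h := (mem_col_iff hY u.1 u.2).mp (by simpa using hu)
    have : u = (u.1, u.2) := rfl
    rw [this]
    simp only [Prod.mk.injEq]
    exact ⟨by omega, trivial⟩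
  · intro u hu
    have h := (mem_col_iff hY u.1 u.2).mp (by simpa using hu)
    have : u = (u.1, u.2) := rfl
    rw [this]
    simp only [Prod.mk.injEq]
    exact ⟨by omega, trivial⟩
  · intro u hu
    have h := (mem_col_iff hY u.1 u.2).mp (by simpa using hu)
    have : col Y u.2 + 1 - u.1 - 1 = col Y u.2 - u.1 := by omega
    simp only [this]

lemma sum_card_swap (P : ℕ × ℕ → ℕ × ℕ → Prop) [DecidableRel P] :
    ∑ p ∈ Y, (Y.filter fun q => P p q).card = ∑ p ∈ Y, (Y.filter fun q => P q p).card := by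
  simp only [Finset.card_filter]
  exact Finset.sum_comm


lemma card_filter_prod (P : ℕ × ℕ → ℕ × ℕ → Prop) [DecidableRel P] :
    ((Y ×ˢ Y).filter fun z => P z.1 z.2).card = ∑ p ∈ Y, (Y.filter fun q => P p q).card := by
  simp only [Finset.card_filter]
  rw [Finset.sum_product]

lemma sum_M (hY : IsYoung Y) :
    ∑ p ∈ Y, (Y.filter fun q => q.1 < p.1 ∧ p.2 < q.2).card
      = ∑ u ∈ Y, (col Y u.2 - u.1) * (row Y u.1 - u.2) := by
  classical
  rw [← card_filter_prod (fun p q => q.1 < p.1 ∧ p.2 < q.2)]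
  have heq : ((Y ×ˢ Y).filter fun z => z.2.1 < z.1.1 ∧ z.1.2 < z.2.2)
      = Y.biUnion (fun u => (Y.filter fun pp => pp.2 = u.2 ∧ u.1 < pp.1)
          ×ˢ (Y.filter fun q => q.1 = u.1 ∧ u.2 < q.2)) := by
    ext z
    simp only [Finset.mem_filter, Finset.mem_product, Finset.mem_biUnion]
    constructor
    · rintro ⟨⟨hp, hq⟩, h1, h2⟩
      refine ⟨(z.2.1, z.1.2), ?_, ⟨hp, rfl, h1⟩, hq, rfl, h2⟩
      exact hY.2 z.1 hp (z.2.1, z.1.2) (hY.1 z.2 hq).1 (hY.1 z.1 hp).2 (le_of_lt h1) le_rfl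
    · rintro ⟨u, hu, ⟨hp, hp2, hp1⟩, hq, hq1, hq2⟩
      exact ⟨⟨hp, hq⟩, by omega, by omega⟩
  rw [heq, Finset.card_biUnion]
  · refine Finset.sum_congr rfl fun u hu => ?_
    rw [Finset.card_product, card_leg hY hu, card_arm hY hu]
  · intro u hu v hv huv
    rw [Function.onFun, Finset.disjoint_left]
    rintro z hz1 hz2
    simp only [Finset.mem_product, Finset.mem_filter] at hz1 hz2
    apply huv
    have e1 : u.2 = v.2 := hz1.1.2.1.symm.trans hz2.1.2.1
    have e2 : u.1 = v.1 := hz1.2.2.1.symm.trans hz2.2.2.1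
    exact Prod.ext e2 e1

lemma card_split (p : ℕ × ℕ) :
    Y.card = (Y.filter fun q => q.1 = p.1).card
      + ((Y.filter fun q => q.2 = p.2 ∧ q.1 ≠ p.1).card
      + ((Y.filter fun q => q.1 < p.1 ∧ q.2 < p.2).card
      + ((Y.filter fun q => q.1 < p.1 ∧ p.2 < q.2).card
      + ((Y.filter fun q => p.1 < q.1 ∧ q.2 < p.2).card
      + (Y.filter fun q => p.1 < q.1 ∧ p.2 < q.2).card)))) := by
  classical
  rw [Finset.card_eq_sum_ones]
  simp only [Finset.card_filter, ← Finset.sum_add_distrib]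
  refine Finset.sum_congr rfl fun q _ => ?_
  split_ifs <;> omega

lemma key (hY : IsYoung Y) :
    Y.card * Y.card
      = ∑ p ∈ Y, row Y p.1 + (∑ p ∈ Y, (col Y p.2 - 1)
        + (2 * ∑ p ∈ Y, (p.1 - 1) * (p.2 - 1)
        + 2 * ∑ p ∈ Y, (col Y p.2 - p.1) * (row Y p.1 - p.2))) := by
  classical
  have h1 : Y.card * Y.card = ∑ _p ∈ Y, Y.card := by
    rw [Finset.sum_const, smul_eq_mul]
  rw [h1]
  have h2 : ∑ p ∈ Y, Y.card = ∑ p ∈ Y, ((Y.filter fun q => q.1 = p.1).card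
      + ((Y.filter fun q => q.2 = p.2 ∧ q.1 ≠ p.1).card
      + ((Y.filter fun q => q.1 < p.1 ∧ q.2 < p.2).card
      + ((Y.filter fun q => q.1 < p.1 ∧ p.2 < q.2).card
      + ((Y.filter fun q => p.1 < q.1 ∧ q.2 < p.2).card
      + (Y.filter fun q => p.1 < q.1 ∧ p.2 < q.2).card))))) :=
    Finset.sum_congr rfl fun p _ => card_split p
  rw [h2]
  simp only [Finset.sum_add_distrib]
  have e1 : ∑ p ∈ Y, (Y.filter fun q => q.1 = p.1).card = ∑ p ∈ Y, row Y p.1 := rfl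
  have e2 : ∑ p ∈ Y, (Y.filter fun q => q.2 = p.2 ∧ q.1 ≠ p.1).card
      = ∑ p ∈ Y, (col Y p.2 - 1) :=
    Finset.sum_congr rfl fun p hp => card_colm hY hp
  have e3 : ∑ p ∈ Y, (Y.filter fun q => q.1 < p.1 ∧ q.2 < p.2).card
      = ∑ p ∈ Y, (p.1 - 1) * (p.2 - 1) :=
    Finset.sum_congr rfl fun p hp => card_rect hY hp
  have e4 : ∑ p ∈ Y, (Y.filter fun q => q.1 < p.1 ∧ p.2 < q.2).card
      = ∑ u ∈ Y, (col Y u.2 - u.1) * (row Y u.1 - u.2) := sum_M hY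
  have e5 : ∑ p ∈ Y, (Y.filter fun q => p.1 < q.1 ∧ q.2 < p.2).card
      = ∑ p ∈ Y, (Y.filter fun q => q.1 < p.1 ∧ p.2 < q.2).card :=
    sum_card_swap (fun p q => p.1 < q.1 ∧ q.2 < p.2)
  have e6 : ∑ p ∈ Y, (Y.filter fun q => p.1 < q.1 ∧ p.2 < q.2).card
      = ∑ p ∈ Y, (Y.filter fun q => q.1 < p.1 ∧ q.2 < p.2).card :=
    sum_card_swap (fun p q => p.1 < q.1 ∧ p.2 < q.2)
  rw [e5, e6, e1, e2, e3, e4]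
  ring

end SumHookAux

open SumHookAux in
theorem sum_hook_sq_eq (n : ℕ) (hn : 0 < n) (Y : Finset (ℕ × ℕ))
    (hY : IsYoung Y) (hcard : Y.card = n) :
    ∑ u ∈ Y, (hk Y u) ^ 2 = (n : ℤ) ^ 2 + ∑ u ∈ Y, (ct u) ^ 2 := by
  classical
  subst hcard
  have hb : ∀ u ∈ Y, 1 ≤ u.2 ∧ u.2 ≤ row Y u.1 := fun u hu =>
    (mem_row_iff hY u.1 u.2).mp (by simpa using hu)
  have hc : ∀ u ∈ Y, 1 ≤ u.1 ∧ u.1 ≤ col Y u.2 := fun u hu =>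
    (mem_col_iff hY u.1 u.2).mp (by simpa using hu)
  have EL : ∑ u ∈ Y, (hk Y u) ^ 2
      = (∑ u ∈ Y, ((row Y u.1 - u.2 : ℕ) : ℤ) ^ 2)
        + (∑ u ∈ Y, ((col Y u.2 - u.1 : ℕ) : ℤ) ^ 2)
        + 2 * (∑ u ∈ Y, ((col Y u.2 - u.1 : ℕ) : ℤ) * ((row Y u.1 - u.2 : ℕ) : ℤ))
        + 2 * (∑ u ∈ Y, ((row Y u.1 - u.2 : ℕ) : ℤ))
        + 2 * (∑ u ∈ Y, ((col Y u.2 - u.1 : ℕ) : ℤ))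
        + (Y.card : ℤ) := by
    have hper : ∀ u ∈ Y, (hk Y u) ^ 2
        = ((row Y u.1 - u.2 : ℕ) : ℤ) ^ 2 + ((col Y u.2 - u.1 : ℕ) : ℤ) ^ 2
          + 2 * (((col Y u.2 - u.1 : ℕ) : ℤ) * ((row Y u.1 - u.2 : ℕ) : ℤ))
          + 2 * ((row Y u.1 - u.2 : ℕ) : ℤ) + 2 * ((col Y u.2 - u.1 : ℕ) : ℤ) + 1 := by
      intro u hu
      have h1 := hb u hu
      have h2 := hc u hu
      have hh : hk Y u = ((row Y u.1 - u.2 : ℕ) : ℤ) + ((col Y u.2 - u.1 : ℕ) : ℤ) + 1 := by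
        unfold hk; omega
      rw [hh]; ring
    rw [Finset.sum_congr rfl hper]
    simp only [Finset.sum_add_distrib, ← Finset.mul_sum, Finset.sum_const, nsmul_eq_mul,
      mul_one]
  have ER : ∑ u ∈ Y, (ct u) ^ 2
      = (∑ u ∈ Y, ((u.2 - 1 : ℕ) : ℤ) ^ 2) + (∑ u ∈ Y, ((u.1 - 1 : ℕ) : ℤ) ^ 2)
        - 2 * (∑ u ∈ Y, ((u.1 - 1 : ℕ) : ℤ) * ((u.2 - 1 : ℕ) : ℤ)) := by
    have hper : ∀ u ∈ Y, (ct u) ^ 2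
        = ((u.2 - 1 : ℕ) : ℤ) ^ 2 + ((u.1 - 1 : ℕ) : ℤ) ^ 2
          - 2 * (((u.1 - 1 : ℕ) : ℤ) * ((u.2 - 1 : ℕ) : ℤ)) := by
      intro u hu
      have h1 := hb u hu
      have h2 := hc u hu
      have hh : ct u = ((u.2 - 1 : ℕ) : ℤ) - ((u.1 - 1 : ℕ) : ℤ) := by
        unfold ct; omega
      rw [hh]; ring
    rw [Finset.sum_congr rfl hper]
    rw [Finset.sum_sub_distrib, Finset.sum_add_distrib, ← Finset.mul_sum]
  have RA2 : (∑ u ∈ Y, ((row Y u.1 - u.2 : ℕ) : ℤ) ^ 2)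
      = ∑ u ∈ Y, ((u.2 - 1 : ℕ) : ℤ) ^ 2 := sum_reflect_row hY (fun k => (k : ℤ) ^ 2)
  have RA1 : (∑ u ∈ Y, ((row Y u.1 - u.2 : ℕ) : ℤ))
      = ∑ u ∈ Y, ((u.2 - 1 : ℕ) : ℤ) := sum_reflect_row hY (fun k => (k : ℤ))
  have RL2 : (∑ u ∈ Y, ((col Y u.2 - u.1 : ℕ) : ℤ) ^ 2)
      = ∑ u ∈ Y, ((u.1 - 1 : ℕ) : ℤ) ^ 2 := sum_reflect_col hY (fun k => (k : ℤ) ^ 2)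
  have RL1 : (∑ u ∈ Y, ((col Y u.2 - u.1 : ℕ) : ℤ))
      = ∑ u ∈ Y, ((u.1 - 1 : ℕ) : ℤ) := sum_reflect_col hY (fun k => (k : ℤ))
  have K := key hY
  have KZ := congrArg (fun m : ℕ => (m : ℤ)) K
  push_cast at KZ
  have T1 : ∑ p ∈ Y, (row Y p.1 : ℤ)
      = (∑ p ∈ Y, ((row Y p.1 - p.2 : ℕ) : ℤ)) + (∑ p ∈ Y, ((p.2 - 1 : ℕ) : ℤ))
        + (Y.card : ℤ) := by
    have hper : ∀ p ∈ Y, (row Y p.1 : ℤ)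
        = ((row Y p.1 - p.2 : ℕ) : ℤ) + ((p.2 - 1 : ℕ) : ℤ) + 1 := by
      intro p hp
      have h1 := hb p hp
      omega
    rw [Finset.sum_congr rfl hper]
    simp only [Finset.sum_add_distrib, Finset.sum_const, nsmul_eq_mul, mul_one]
  have T2 : ∑ p ∈ Y, ((col Y p.2 - 1 : ℕ) : ℤ)
      = (∑ p ∈ Y, ((col Y p.2 - p.1 : ℕ) : ℤ)) + (∑ p ∈ Y, ((p.1 - 1 : ℕ) : ℤ)) := by
    have hper : ∀ p ∈ Y, ((col Y p.2 - 1 : ℕ) : ℤ)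
        = ((col Y p.2 - p.1 : ℕ) : ℤ) + ((p.1 - 1 : ℕ) : ℤ) := by
      intro p hp
      have h2 := hc p hp
      omega
    rw [Finset.sum_congr rfl hper, Finset.sum_add_distrib]
  rw [T1, T2] at KZ
  have hsq : ((Y.card : ℤ)) ^ 2 = (Y.card : ℤ) * (Y.card : ℤ) := by ring
  rw [EL, ER, hsq]
  linarith [KZ, RA2, RA1, RL2, RL1]
end

section
/- For any partition λ of a positive integer n and any integer k ≥ 3, Σ_{u∈λ} h(u)^k ≤ n^k + Σ_{u∈λ} |c(u)|^k, with equality if and only if λ is a hook (i.e., λ_2 ≤ 1). -/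
open Finset

/-- `λ` is a hook partition: `λ_i ≤ 1` for all `i ≥ 2`. -/
def IsHook (Y : Finset (ℕ × ℕ)) : Prop := ∀ i, 2 ≤ i → row Y i ≤ 1


namespace SHP

/-- `dd e u = (u+1)^e - u^e` over ℤ. -/
def dd (e u : ℕ) : ℤ := ((u : ℤ) + 1) ^ e - (u : ℤ) ^ e

lemma dd_expand (e u : ℕ) :
    dd e u = ∑ i ∈ range e, ((u : ℤ) + 1) ^ i * (u : ℤ) ^ (e - 1 - i) := by
  have h := geom_sum₂_mul ((u : ℤ) + 1) (u : ℤ) e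
  have h1 : ((u : ℤ) + 1) - u = 1 := by ring
  rw [h1, mul_one] at h
  rw [dd, ← h]

lemma dd_nonneg (e u : ℕ) : 0 ≤ dd e u := by
  rw [dd_expand]
  exact Finset.sum_nonneg fun i _ => by positivity

lemma dd_mono (e : ℕ) {u v : ℕ} (h : u ≤ v) : dd e u ≤ dd e v := by
  rw [dd_expand, dd_expand]
  apply Finset.sum_le_sum
  intro i _
  have h' : (u : ℤ) ≤ v := by exact_mod_cast h
  have h0 : (0:ℤ) ≤ u := by positivity
  apply mul_le_mul
  · exact pow_le_pow_left₀ (by linarith) (by linarith) i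
  · exact pow_le_pow_left₀ h0 h' _
  · positivity
  · positivity

lemma dd_le (e u : ℕ) : dd e u ≤ (e : ℤ) * ((u : ℤ) + 1) ^ (e - 1) := by
  rw [dd_expand]
  calc ∑ i ∈ range e, ((u : ℤ) + 1) ^ i * (u : ℤ) ^ (e - 1 - i)
      ≤ ∑ _i ∈ range e, ((u : ℤ) + 1) ^ (e - 1) := by
        apply Finset.sum_le_sum
        intro i hi
        simp only [mem_range] at hi
        have h0 : (0:ℤ) ≤ u := by positivity
        calc ((u : ℤ) + 1) ^ i * (u : ℤ) ^ (e - 1 - i)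
            ≤ ((u : ℤ) + 1) ^ i * ((u : ℤ) + 1) ^ (e - 1 - i) := by
              apply mul_le_mul_of_nonneg_left (pow_le_pow_left₀ h0 (by linarith) _) (by positivity)
          _ = ((u : ℤ) + 1) ^ (e - 1) := by
              rw [← pow_add]; congr 1; omega
    _ = (e : ℤ) * ((u : ℤ) + 1) ^ (e - 1) := by
        rw [Finset.sum_const, card_range]; push_cast; ring

lemma dd_ge (e u : ℕ) : (e : ℤ) * (u : ℤ) ^ (e - 1) ≤ dd e u := by
  rw [dd_expand]
  calc (e : ℤ) * (u : ℤ) ^ (e - 1) = ∑ _i ∈ range e, (u : ℤ) ^ (e - 1) := by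
        rw [Finset.sum_const, card_range]; push_cast; ring
    _ ≤ ∑ i ∈ range e, ((u : ℤ) + 1) ^ i * (u : ℤ) ^ (e - 1 - i) := by
        apply Finset.sum_le_sum
        intro i hi
        simp only [mem_range] at hi
        have h0 : (0:ℤ) ≤ u := by positivity
        calc (u : ℤ) ^ (e - 1) = (u:ℤ) ^ i * (u : ℤ) ^ (e - 1 - i) := by
              rw [← pow_add]; congr 1; omega
          _ ≤ ((u : ℤ) + 1) ^ i * (u : ℤ) ^ (e - 1 - i) := by
              apply mul_le_mul_of_nonneg_right (pow_le_pow_left₀ h0 (by linarith) _) (by positivity)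

/-- nonneg + monotone + convex integer functions. -/
structure CMN (F : ℕ → ℤ) : Prop where
  nn : ∀ t, 0 ≤ F t
  mono : ∀ t, F t ≤ F (t + 1)
  cvx : ∀ t, 2 * F (t + 1) ≤ F (t + 2) + F t

lemma CMN.mul {F G : ℕ → ℤ} (hF : CMN F) (hG : CMN G) : CMN (fun t => F t * G t) := by
  refine ⟨fun t => mul_nonneg (hF.nn t) (hG.nn t), ?_, ?_⟩
  · intro t
    exact mul_le_mul (hF.mono t) (hG.mono t) (hG.nn t) (le_trans (hF.nn t) (hF.mono t))
  · intro t
    have f01 := hF.mono t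
    have f12 := hF.mono (t+1)
    have g01 := hG.mono t
    have g12 := hG.mono (t+1)
    have fc := hF.cvx t
    have gc := hG.cvx t
    have f0 := hF.nn t
    have g0 := hG.nn t
    have f1 := hF.nn (t+1)
    have g1 := hG.nn (t+1)
    nlinarith [mul_nonneg (sub_nonneg.2 (le_trans f01 f12)) (sub_nonneg.2 (le_trans g01 g12)),
      mul_nonneg (sub_nonneg.2 f01) (sub_nonneg.2 g01)]

lemma CMN.pow (c e : ℕ) : CMN (fun t => ((t : ℤ) + c) ^ e) := by
  induction e with
  | zero => exact ⟨fun t => by simp, fun t => by simp, fun t => by simp⟩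
  | succ e ih =>
    have base : CMN (fun t => ((t : ℤ) + c)) := by
      refine ⟨fun t => by positivity, fun t => by push_cast; linarith, fun t => by push_cast; ring_nf; omega⟩
    have h : (fun t : ℕ => ((t : ℤ) + c) ^ (e + 1)) = fun t : ℕ => ((t : ℤ) + c) ^ e * ((t : ℤ) + c) := by
      funext t; rw [pow_succ]
    rw [h]; exact ih.mul base

lemma dd_cvx (e : ℕ) : ∀ t, 2 * dd e (t + 1) ≤ dd e (t + 2) + dd e t := by
  intro t
  have H : CMN (fun u => dd e u) := by
    have : ∀ u, dd e u = ∑ i ∈ range e, ((u : ℤ) + 1) ^ i * ((u:ℤ) + 0) ^ (e - 1 - i) := by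
      intro u; rw [dd_expand]; simp
    constructor
    · intro t; exact dd_nonneg e t
    · intro t; exact dd_mono e (Nat.le_succ t)
    · intro t
      rw [this t, this (t+1), this (t+2), ← Finset.sum_add_distrib, Finset.mul_sum]
      apply Finset.sum_le_sum
      intro i _
      have h1 : CMN (fun u => ((u : ℤ) + 1) ^ i * ((u:ℤ) + 0) ^ (e - 1 - i)) :=
        (CMN.pow 1 i).mul (CMN.pow 0 (e - 1 - i))
      have := h1.cvx t
      convert this using 2
  exact H.cvx t

lemma dd_slope (e : ℕ) : ∀ u v : ℕ, u ≤ v → dd e (u + 1) - dd e u ≤ dd e (v + 1) - dd e v := by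
  intro u v h
  induction v, h using Nat.le_induction with
  | base => exact le_refl _
  | succ v hv ih =>
    have := dd_cvx e v
    linarith

lemma dd_pair {k : ℕ} : ∀ p q : ℕ, dd k (p + 1) + dd k (q + 1) ≤ dd k 1 + dd k (p + q + 1) := by
  intro p
  induction p with
  | zero => intro q; simp [add_comm]
  | succ p ih =>
    intro q
    have h1 := ih q
    have h2 := dd_slope k (p + 1) (p + q + 1) (by omega)
    have e1 : p + 1 + 1 = p + 1 + 1 := rfl
    have e2 : p + 1 + q + 1 = p + q + 1 + 1 := by omega
    rw [e2]
    linarith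


lemma tele (e : ℕ) : ∀ (c X : ℕ), c ≤ X →
    ((X : ℤ)) ^ e - (((X - c : ℕ) : ℤ)) ^ e = ∑ s ∈ range c, dd e (X - 1 - s) := by
  intro c
  induction c with
  | zero => intro X _; simp
  | succ c ih =>
    intro X hc
    rw [Finset.sum_range_succ, ← ih X (by omega)]
    have h1 : ((X - c : ℕ) : ℤ) = (X : ℤ) - c := by omega
    have h2 : ((X - (c+1) : ℕ) : ℤ) = (X : ℤ) - c - 1 := by omega
    have h3 : ((X - 1 - c : ℕ) : ℤ) = (X : ℤ) - c - 1 := by omega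
    rw [dd, h1, h2, h3, show ((X:ℤ) - c - 1) + 1 = (X:ℤ) - c by ring]
    ring

lemma binom4 (k x m : ℕ) (hk : 3 ≤ k) :
    x ^ k + m ^ k + k * x ^ (k - 1) * m + k * x * m ^ (k - 1) ≤ (x + m) ^ k := by
  rw [add_pow]
  have hsub : ({0, 1, k - 1, k} : Finset ℕ) ⊆ range (k + 1) := by
    intro t ht; simp at ht; simp; omega
  calc x ^ k + m ^ k + k * x ^ (k - 1) * m + k * x * m ^ (k - 1)
      = ∑ i ∈ ({0, 1, k - 1, k} : Finset ℕ), x ^ i * m ^ (k - i) * (k.choose i) := by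
        rw [show ({0, 1, k - 1, k} : Finset ℕ) = insert 0 (insert 1 (insert (k-1) {k})) from rfl]
        rw [Finset.sum_insert (by simp; omega), Finset.sum_insert (by simp; omega),
          Finset.sum_insert (by simp; omega), Finset.sum_singleton]
        rw [Nat.choose_symm (by omega : 1 ≤ k), Nat.choose_one_right,
          Nat.choose_zero_right, Nat.choose_self]
        have e1 : k - 0 = k := by omega
        have e2 : k - (k - 1) = 1 := by omega
        have e3 : k - k = 0 := by omega
        rw [e1, e2, e3]
        ring
    _ ≤ ∑ i ∈ range (k + 1), x ^ i * m ^ (k - i) * (k.choose i) :=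
        Finset.sum_le_sum_of_subset hsub

lemma finalineq (k N m : ℕ) (hk : 3 ≤ k) (hN : 3 ≤ N) (hm : 1 ≤ m) :
    ((N : ℤ)) ^ k + (m : ℤ) * (dd k 1 + dd k (N - 2)) + (m : ℤ) ^ k
      < ((N : ℤ) + m) ^ k := by
  have hdd1 : dd k 1 = 2 ^ k - 1 := by norm_num [dd]
  have hc1 : ((N - 2 : ℕ) : ℤ) + 1 = (N : ℤ) - 1 := by omega
  have h1 : dd k (N - 2) ≤ (k : ℤ) * ((N : ℤ) - 1) ^ (k - 1) := by
    have := dd_le k (N - 2); rwa [hc1] at this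
  -- k*N^(k-1) - k*(N-1)^(k-1) ≥ k*(k-1)*2^(k-2) ≥ 2^k
  have h3 : ((N : ℤ)) ^ (k-1) - ((N : ℤ) - 1) ^ (k-1) = dd (k-1) (N-1) := by
    rw [dd]
    have e1 : ((N - 1 : ℕ) : ℤ) + 1 = (N : ℤ) := by omega
    have e2 : ((N - 1 : ℕ) : ℤ) = (N : ℤ) - 1 := by omega
    rw [e1, e2]
  have h4 : ((k:ℤ) - 1) * ((N - 1 : ℕ) : ℤ) ^ (k - 1 - 1) ≤ dd (k-1) (N-1) := by
    have := dd_ge (k-1) (N-1)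
    have e : ((k - 1 : ℕ) : ℤ) = (k : ℤ) - 1 := by omega
    rwa [e] at this
  have h5 : ((k:ℤ) - 1) * (2:ℤ) ^ (k - 2) ≤ ((k:ℤ) - 1) * ((N - 1 : ℕ) : ℤ) ^ (k - 1 - 1) := by
    apply mul_le_mul_of_nonneg_left _ (by omega)
    have : (2:ℤ) ≤ ((N - 1 : ℕ) : ℤ) := by omega
    calc (2:ℤ) ^ (k-2) ≤ ((N - 1 : ℕ) : ℤ) ^ (k - 2) := pow_le_pow_left₀ (by norm_num) this _
      _ = ((N - 1 : ℕ) : ℤ) ^ (k - 1 - 1) := by congr 1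
  have h6 : (2:ℤ) ^ k ≤ (k:ℤ) * (((k:ℤ) - 1) * (2:ℤ) ^ (k - 2)) := by
    have e : (2:ℤ) ^ k = 4 * 2 ^ (k - 2) := by
      have hkk : k = (k - 2) + 2 := by omega
      calc (2:ℤ) ^ k = 2 ^ ((k - 2) + 2) := by rw [← hkk]
        _ = 4 * 2 ^ (k - 2) := by rw [pow_add]; ring
    rw [e]
    have h2 : (0:ℤ) < 2 ^ (k-2) := by positivity
    have : (4:ℤ) ≤ (k:ℤ) * ((k:ℤ) - 1) := by nlinarith [show (3:ℤ) ≤ k by exact_mod_cast hk]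
    nlinarith
  -- combine: dd k 1 + dd k (N-2) ≤ k * N^(k-1)
  have key : dd k 1 + dd k (N - 2) ≤ (k:ℤ) * ((N:ℤ)) ^ (k-1) := by
    have : (k:ℤ) * ((N:ℤ))^(k-1) - (k:ℤ) * ((N:ℤ)-1)^(k-1) = (k:ℤ) * dd (k-1) (N-1) := by
      rw [← h3]; ring
    have hge : (2:ℤ)^k ≤ (k:ℤ) * dd (k-1) (N-1) := by
      calc (2:ℤ)^k ≤ (k:ℤ) * (((k:ℤ) - 1) * (2:ℤ) ^ (k - 2)) := h6
        _ ≤ (k:ℤ) * dd (k-1) (N-1) := by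
            apply mul_le_mul_of_nonneg_left (le_trans h5 h4) (by positivity)
    linarith
  have hb := binom4 k N m hk
  have hbz : ((N:ℤ))^k + (m:ℤ)^k + (k:ℤ) * (N:ℤ)^(k-1) * m + (k:ℤ) * N * (m:ℤ)^(k-1)
      ≤ ((N:ℤ) + m)^k := by exact_mod_cast hb
  have hpos : (0:ℤ) < (k:ℤ) * N * (m:ℤ)^(k-1) := by
    have : (0:ℤ) < (m:ℤ) := by exact_mod_cast hm
    positivity
  have hm0 : (0:ℤ) ≤ (m:ℤ) := by positivity
  nlinarith [mul_le_mul_of_nonneg_left key hm0]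

/-- Partition data: `f` = parts, `g` = conjugate parts, `l` = number of parts. -/
structure PD (f g : ℕ → ℕ) (l : ℕ) : Prop where
  hl : 1 ≤ l
  hg1 : g 1 = l
  hf : ∀ i, 1 ≤ i → (1 ≤ f i ↔ i ≤ l)
  hg : ∀ j, 1 ≤ j → (1 ≤ g j ↔ j ≤ f 1)
  dual : ∀ i j, 1 ≤ i → 1 ≤ j → (j ≤ f i ↔ i ≤ g j)

namespace PD
variable {f g : ℕ → ℕ} {l : ℕ}

lemma ha (h : PD f g l) : 1 ≤ f 1 := (h.hf 1 le_rfl).2 h.hl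

lemma symm (h : PD f g l) : PD g f (f 1) :=
  ⟨h.ha, rfl, h.hg, fun j hj => (h.hf j hj).trans (by rw [h.hg1]),
    fun i j hi hj => (h.dual j i hj hi).symm⟩

lemma f_anti (h : PD f g l) {i i' : ℕ} (hi : 1 ≤ i) (hii : i ≤ i') : f i' ≤ f i := by
  rcases Nat.eq_zero_or_pos (f i') with h0 | h0
  · omega
  · have hi' : 1 ≤ i' := le_trans hi hii
    have h1 : i' ≤ g (f i') := (h.dual i' (f i') hi' h0).1 le_rfl
    exact (h.dual i (f i') hi h0).2 (le_trans hii h1)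

lemma f_le (h : PD f g l) {i : ℕ} (hi : 1 ≤ i) : f i ≤ f 1 := h.f_anti le_rfl hi

lemma g_anti (h : PD f g l) {j j' : ℕ} (hj : 1 ≤ j) (hjj : j ≤ j') : g j' ≤ g j :=
  h.symm.f_anti hj hjj

lemma g_le_l (h : PD f g l) {j : ℕ} (hj : 1 ≤ j) : g j ≤ l := by
  have := h.symm.f_le hj; rwa [h.hg1] at this

lemma f_pos (h : PD f g l) {i : ℕ} (hi : 1 ≤ i) (hil : i ≤ l) : 1 ≤ f i := (h.hf i hi).2 hil

lemma g_pos (h : PD f g l) {j : ℕ} (hj : 1 ≤ j) (hja : j ≤ f 1) : 1 ≤ g j := (h.hg j hj).2 hja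

lemma f_zero (h : PD f g l) {i : ℕ} (hi : l < i) : f i = 0 := by
  by_contra hne
  have h1 : 1 ≤ i := by omega
  have := (h.hf i h1).1 (by omega)
  omega

end PD

/-- The first-row hook lengths, together with the complements of the first-column
hook lengths (rows ≥ 2), tile `{1, …, a+l-1}`. -/
lemma bijK {f g : ℕ → ℕ} {l : ℕ} (h : PD f g l) (F : ℕ → ℤ) :
    ∑ j ∈ Icc 1 (f 1), F (f 1 + g j - j) + ∑ i ∈ Icc 2 l, F (i - 1 + (f 1 - f i))
      = ∑ t ∈ Icc 1 (f 1 + l - 1), F t := by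
  set a := f 1 with hadef
  have ha : 1 ≤ a := h.ha
  set φ1 : ℕ → ℕ := fun j => a + g j - j with hφ1
  set φ2 : ℕ → ℕ := fun i => i - 1 + (a - f i) with hφ2
  have inj1 : ∀ x ∈ Icc 1 a, ∀ y ∈ Icc 1 a, φ1 x = φ1 y → x = y := by
    intro x hx y hy hxy
    simp only [mem_Icc] at hx hy
    by_contra hne
    rcases Nat.lt_or_ge x y with hlt | hge
    · have := h.g_anti hx.1 (le_of_lt hlt)
      have hg1 : 1 ≤ g y := h.g_pos hy.1 hy.2
      simp only [hφ1] at hxy; omega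
    · have hlt : y < x := by omega
      have := h.g_anti hy.1 (le_of_lt hlt)
      have hg1 : 1 ≤ g x := h.g_pos hx.1 hx.2
      simp only [hφ1] at hxy; omega
  have inj2 : ∀ x ∈ Icc 2 l, ∀ y ∈ Icc 2 l, φ2 x = φ2 y → x = y := by
    intro x hx y hy hxy
    simp only [mem_Icc] at hx hy
    by_contra hne
    rcases Nat.lt_or_ge x y with hlt | hge
    · have := h.f_anti (show 1 ≤ x by omega) (le_of_lt hlt)
      have hf1 : f x ≤ a := h.f_le (by omega)
      simp only [hφ2] at hxy; omega
    · have hlt : y < x := by omega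
      have := h.f_anti (show 1 ≤ y by omega) (le_of_lt hlt)
      have hf1 : f y ≤ a := h.f_le (by omega)
      simp only [hφ2] at hxy; omega
  have sub1 : ∀ j ∈ Icc 1 a, φ1 j ∈ Icc 1 (a + l - 1) := by
    intro j hj; simp only [mem_Icc] at hj ⊢
    have h1 : 1 ≤ g j := h.g_pos hj.1 hj.2
    have h2 : g j ≤ l := h.g_le_l hj.1
    simp only [hφ1]; omega
  have sub2 : ∀ i ∈ Icc 2 l, φ2 i ∈ Icc 1 (a + l - 1) := by
    intro i hi; simp only [mem_Icc] at hi ⊢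
    have h1 : 1 ≤ f i := h.f_pos (by omega) hi.2
    have h2 : f i ≤ a := h.f_le (by omega)
    simp only [hφ2]; omega
  have hdisj : Disjoint ((Icc 1 a).image φ1) ((Icc 2 l).image φ2) := by
    rw [Finset.disjoint_left]
    intro t ht1 ht2
    simp only [mem_image, mem_Icc] at ht1 ht2
    obtain ⟨j, hj, hj2⟩ := ht1
    obtain ⟨i, hi, hi2⟩ := ht2
    have hgj1 : 1 ≤ g j := h.g_pos hj.1 hj.2
    have hgjl : g j ≤ l := h.g_le_l hj.1
    have hfi1 : 1 ≤ f i := h.f_pos (by omega) hi.2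
    have hfia : f i ≤ a := h.f_le (by omega)
    rcases le_or_gt j (f i) with hle | hlt
    · have := (h.dual i j (by omega) hj.1).1 hle
      simp only [hφ1] at hj2; simp only [hφ2] at hi2; omega
    · have : ¬ (i ≤ g j) := fun hc => by
        have := (h.dual i j (by omega) hj.1).2 hc; omega
      simp only [hφ1] at hj2; simp only [hφ2] at hi2; omega
  have hcard1 : ((Icc 1 a).image φ1).card = a := by
    rw [Finset.card_image_of_injOn (by intro x hx y hy; exact inj1 x hx y hy), Nat.card_Icc]
    omega
  have hcard2 : ((Icc 2 l).image φ2).card = l - 1 := by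
    rw [Finset.card_image_of_injOn (by intro x hx y hy; exact inj2 x hx y hy), Nat.card_Icc]
    omega
  have hunion : (Icc 1 a).image φ1 ∪ (Icc 2 l).image φ2 = Icc 1 (a + l - 1) := by
    apply Finset.eq_of_subset_of_card_le
    · intro t ht
      rcases Finset.mem_union.1 ht with ht | ht
      · obtain ⟨j, hj, hj2⟩ := Finset.mem_image.1 ht; exact hj2 ▸ sub1 j hj
      · obtain ⟨i, hi, hi2⟩ := Finset.mem_image.1 ht; exact hi2 ▸ sub2 i hi
    · rw [Finset.card_union_of_disjoint hdisj, hcard1, hcard2, Nat.card_Icc]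
      have hl := h.hl; omega
  calc ∑ j ∈ Icc 1 a, F (φ1 j) + ∑ i ∈ Icc 2 l, F (φ2 i)
      = ∑ t ∈ (Icc 1 a).image φ1, F t + ∑ t ∈ (Icc 2 l).image φ2, F t := by
        rw [Finset.sum_image inj1, Finset.sum_image inj2]
    _ = ∑ t ∈ (Icc 1 a).image φ1 ∪ (Icc 2 l).image φ2, F t :=
        (Finset.sum_union hdisj).symm
    _ = ∑ t ∈ Icc 1 (a + l - 1), F t := by rw [hunion]


section Helpers
variable {M : Type*} [AddCommMonoid M]

lemma sum_Icc2_shift (l : ℕ) (W : ℕ → M) :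
    ∑ i ∈ Icc 2 l, W i = ∑ t ∈ Icc 1 (l - 1), W (t + 1) := by
  apply Finset.sum_nbij' (fun i => i - 1) (fun t => t + 1) <;>
    simp only [mem_Icc] <;> intros <;> first | omega | (congr 1; omega)

lemma sum_Icc_to_range (c : ℕ) (W : ℕ → M) :
    ∑ s ∈ Icc 1 c, W s = ∑ s ∈ range c, W (s + 1) := by
  apply Finset.sum_nbij' (fun i => i - 1) (fun t => t + 1) <;>
    simp only [mem_Icc, mem_range] <;> intros <;> first | omega | (congr 1; omega)

lemma sum_Icc_reflect (c : ℕ) (W : ℕ → M) :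
    ∑ j ∈ Icc 1 c, W j = ∑ j ∈ Icc 1 c, W (c + 1 - j) := by
  apply Finset.sum_nbij' (fun i => c + 1 - i) (fun t => c + 1 - t) <;>
    simp only [mem_Icc] <;> intros <;> first | omega | (congr 1; omega)

lemma sum_Icc_split_first {n : ℕ} (hn : 1 ≤ n) (W : ℕ → M) :
    ∑ i ∈ Icc 1 n, W i = W 1 + ∑ i ∈ Icc 2 n, W i := by
  rw [show Icc 1 n = insert 1 (Icc 2 n) by ext x; simp only [mem_insert, mem_Icc]; omega,
    Finset.sum_insert (by simp)]

lemma sum_Icc_split_last {n : ℕ} (hn : 1 ≤ n) (W : ℕ → M) :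
    ∑ i ∈ Icc 1 n, W i = ∑ i ∈ Icc 1 (n - 1), W i + W n := by
  rw [show Icc 1 n = insert n (Icc 1 (n - 1)) by ext x; simp only [mem_insert, mem_Icc]; omega,
    Finset.sum_insert (by simp only [mem_Icc]; omega)]
  exact add_comm _ _

lemma sum_Icc_concat {a c : ℕ} (ha : 1 ≤ a) (hac : a - 1 ≤ c) (W : ℕ → M) :
    ∑ i ∈ Icc 1 (a - 1), W i + ∑ i ∈ Icc a c, W i = ∑ i ∈ Icc 1 c, W i := by
  have h1 : Icc 1 (a - 1) = Ico 1 a := by ext x; simp only [mem_Icc, mem_Ico]; omega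
  have h2 : Icc a c = Ico a (c + 1) := by ext x; simp only [mem_Icc, mem_Ico]; omega
  have h3 : Icc 1 c = Ico 1 (c + 1) := by ext x; simp only [mem_Icc, mem_Ico]; omega
  rw [h1, h2, h3]
  exact Finset.sum_Ico_consecutive _ (by omega) (by omega)

end Helpers

section Cells
variable {M : Type*} [AddCommMonoid M] {f g : ℕ → ℕ} {l : ℕ}

/-- The cell set of the partition with the first row and column stripped (shifted). -/
def cells (f : ℕ → ℕ) (a l : ℕ) : Finset (ℕ × ℕ) :=
  ((Icc 1 (l - 1)) ×ˢ (Icc 1 (a - 1))).filter (fun p => p.2 + 1 ≤ f (p.1 + 1))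

lemma cellsum (h : PD f g l) (V : ℕ → ℕ → M) :
    ∑ p ∈ cells f (f 1) l, V p.1 p.2
      = ∑ i ∈ Icc 2 l, ∑ s ∈ range (f i - 1), V (i - 1) (s + 1) := by
  rw [cells, Finset.sum_filter, Finset.sum_product, sum_Icc2_shift l
    (fun i => ∑ s ∈ range (f i - 1), V (i - 1) (s + 1))]
  apply Finset.sum_congr rfl
  intro t ht
  simp only [mem_Icc] at ht
  have hfle : f (t + 1) ≤ f 1 := h.f_le (by omega)
  have : ∑ s ∈ Icc 1 (f 1 - 1), (if s + 1 ≤ f (t + 1) then V t s else 0)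
      = ∑ s ∈ Icc 1 (f (t + 1) - 1), V t s := by
    rw [← Finset.sum_filter]
    apply Finset.sum_congr
    · ext x; simp only [mem_filter, mem_Icc]; omega
    · intros; rfl
  rw [this, sum_Icc_to_range]
  simp

lemma cells_swap (h : PD f g l) :
    cells f (f 1) l = ((Icc 1 (l - 1)) ×ˢ (Icc 1 (f 1 - 1))).filter
      (fun p => p.1 + 1 ≤ g (p.2 + 1)) := by
  apply Finset.filter_congr
  intro p hp
  simp only [mem_product, mem_Icc] at hp
  exact h.dual (p.1 + 1) (p.2 + 1) (by omega) (by omega)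

lemma cellsum' (h : PD f g l) (V : ℕ → ℕ → M) :
    ∑ p ∈ cells f (f 1) l, V p.1 p.2
      = ∑ j ∈ Icc 2 (f 1), ∑ t ∈ range (g j - 1), V (t + 1) (j - 1) := by
  rw [cells_swap h, Finset.sum_filter, Finset.sum_product_right, sum_Icc2_shift (f 1)
    (fun j => ∑ t ∈ range (g j - 1), V (t + 1) (j - 1))]
  apply Finset.sum_congr rfl
  intro s hs
  simp only [mem_Icc] at hs
  have hgle : g (s + 1) ≤ l := h.g_le_l (by omega)
  have : ∑ t ∈ Icc 1 (l - 1), (if t + 1 ≤ g (s + 1) then V t s else 0)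
      = ∑ t ∈ Icc 1 (g (s + 1) - 1), V t s := by
    rw [← Finset.sum_filter]
    apply Finset.sum_congr
    · ext x; simp only [mem_filter, mem_Icc]; omega
    · intros; rfl
  rw [this, sum_Icc_to_range]
  simp

lemma cells_card (h : PD f g l) : (cells f (f 1) l).card = ∑ i ∈ Icc 2 l, (f i - 1) := by
  rw [Finset.card_eq_sum_ones, cellsum h (fun _ _ => (1 : ℕ))]
  apply Finset.sum_congr rfl
  intro i _
  simp

end Cells

lemma keylemma {f g : ℕ → ℕ} {l k : ℕ} (h : PD f g l) (hk : 3 ≤ k) (hf2 : 2 ≤ f 2) :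
    ∑ j ∈ Icc 1 (f 1), ((f 1 + g j - j : ℕ) : ℤ) ^ k
      + ∑ i ∈ Icc 2 l, ((l + f i - i : ℕ) : ℤ) ^ k
      + ((∑ i ∈ Icc 2 l, (f i - 1) : ℕ) : ℤ) ^ k
    < ((f 1 + l - 1 + ∑ i ∈ Icc 2 l, (f i - 1) : ℕ) : ℤ) ^ k
      + (∑ j ∈ Icc 1 (f 1), ((j - 1 : ℕ) : ℤ) ^ k + ∑ i ∈ Icc 2 l, ((i - 1 : ℕ) : ℤ) ^ k) := by
  set Pw : ℕ → ℤ := fun t => (t : ℤ) ^ k with hPw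
  set a := f 1 with hadef
  set n₁ := a + l - 1 with hn₁
  set m := ∑ i ∈ Icc 2 l, (f i - 1) with hm
  have ha2 : 2 ≤ a := le_trans hf2 (h.f_le one_le_two)
  have hl2 : 2 ≤ l := by
    have h1 : 1 ≤ f 2 := by omega
    have := (h.dual 2 1 (by omega) (by omega)).1 (by omega)
    rw [h.hg1] at this; exact this
  have hn₁3 : 3 ≤ n₁ := by omega
  have hm1 : 1 ≤ m := by
    have h2l : (2 : ℕ) ∈ Icc 2 l := by simp only [mem_Icc]; omega
    calc 1 ≤ f 2 - 1 := by omega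
      _ ≤ m := Finset.single_le_sum (f := fun i => f i - 1) (fun i _ => Nat.zero_le _) h2l
  -- row and column complement identities
  have rowId := bijK h Pw
  have colId := bijK h.symm Pw
  rw [h.hg1, show l + f 1 - 1 = n₁ by omega] at colId
  rw [sum_Icc_split_first (by omega : 1 ≤ l) (fun i => Pw (l + f i - i)),
    show l + f 1 - 1 = n₁ by omega] at colId
  set T := ∑ t ∈ Icc 1 n₁, Pw t with hT
  -- content sums
  have hBa : ∑ j ∈ Icc 1 a, Pw (j - 1) = ∑ t ∈ Icc 1 (a - 1), Pw t := by
    rw [sum_Icc_split_first (by omega : 1 ≤ a) (fun j => Pw (j - 1)),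
      sum_Icc2_shift a (fun j => Pw (j - 1))]
    simp [hPw, zero_pow (show k ≠ 0 by omega)]
  have hBl : ∑ i ∈ Icc 2 l, Pw (i - 1) = ∑ t ∈ Icc 1 (l - 1), Pw t := by
    rw [sum_Icc2_shift l (fun i => Pw (i - 1))]
    simp
  -- decomposition of T along the first row / first column
  have hT1 : T = Pw n₁ + ∑ t ∈ Icc 1 (a - 1), Pw t + ∑ i ∈ Icc 2 l, Pw (a + i - 2) := by
    rw [hT, sum_Icc_split_last (by omega : 1 ≤ n₁) Pw,
      ← sum_Icc_concat (by omega : 1 ≤ a) (by omega : a - 1 ≤ n₁ - 1) Pw]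
    have : ∑ t ∈ Icc a (n₁ - 1), Pw t = ∑ i ∈ Icc 2 l, Pw (a + i - 2) := by
      apply Finset.sum_nbij' (fun t => t - a + 2) (fun i => a + i - 2) <;>
        simp only [mem_Icc] <;> intros <;> first | omega | (congr 1; omega)
    rw [this]; ring
  have hT2 : T = Pw n₁ + ∑ t ∈ Icc 1 (l - 1), Pw t + ∑ j ∈ Icc 2 a, Pw (l + j - 2) := by
    rw [hT, sum_Icc_split_last (by omega : 1 ≤ n₁) Pw,
      ← sum_Icc_concat (by omega : 1 ≤ l) (by omega : l - 1 ≤ n₁ - 1) Pw]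
    have : ∑ t ∈ Icc l (n₁ - 1), Pw t = ∑ j ∈ Icc 2 a, Pw (l + j - 2) := by
      apply Finset.sum_nbij' (fun t => t - l + 2) (fun j => l + j - 2) <;>
        simp only [mem_Icc] <;> intros <;> first | omega | (congr 1; omega)
    rw [this]; ring
  -- rewrite complements and telescope
  have hRow : ∑ i ∈ Icc 2 l, Pw (a + i - 2) - ∑ i ∈ Icc 2 l, Pw (i - 1 + (a - f i))
      = ∑ i ∈ Icc 2 l, ∑ s ∈ range (f i - 1), dd k (a + i - 2 - 1 - s) := by
    rw [← Finset.sum_sub_distrib]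
    apply Finset.sum_congr rfl
    intro i hi
    simp only [mem_Icc] at hi
    have hf1 : 1 ≤ f i := h.f_pos (by omega) hi.2
    have hfa : f i ≤ a := h.f_le (by omega)
    have e1 : i - 1 + (a - f i) = a + i - 2 - (f i - 1) := by omega
    rw [e1]
    exact tele k (f i - 1) (a + i - 2) (by omega)
  have hCol : ∑ j ∈ Icc 2 a, Pw (l + j - 2) - ∑ j ∈ Icc 2 a, Pw (j - 1 + (l - g j))
      = ∑ j ∈ Icc 2 a, ∑ t ∈ range (g j - 1), dd k (l + j - 2 - 1 - t) := by
    rw [← Finset.sum_sub_distrib]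
    apply Finset.sum_congr rfl
    intro j hj
    simp only [mem_Icc] at hj
    have hg1 : 1 ≤ g j := h.g_pos (by omega) hj.2
    have hgl : g j ≤ l := h.g_le_l (by omega)
    have e1 : j - 1 + (l - g j) = l + j - 2 - (g j - 1) := by omega
    rw [e1]
    exact tele k (g j - 1) (l + j - 2) (by omega)
  -- cell form
  have hRowCells : ∑ i ∈ Icc 2 l, ∑ s ∈ range (f i - 1), dd k (a + i - 2 - 1 - s)
      = ∑ p ∈ cells f a l, dd k (a + p.1 - p.2 - 1) := by
    rw [cellsum h (fun t s => dd k (a + t - s - 1))]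
    apply Finset.sum_congr rfl
    intro i hi
    simp only [mem_Icc] at hi
    apply Finset.sum_congr rfl
    intro s _
    congr 1
    omega
  have hColCells : ∑ j ∈ Icc 2 a, ∑ t ∈ range (g j - 1), dd k (l + j - 2 - 1 - t)
      = ∑ p ∈ cells f a l, dd k (l + p.2 - p.1 - 1) := by
    rw [cellsum' h (fun t s => dd k (l + s - t - 1))]
    apply Finset.sum_congr rfl
    intro j hj
    simp only [mem_Icc] at hj
    apply Finset.sum_congr rfl
    intro t _
    congr 1
    omega
  -- the pair bound on each cell
  have hPair : ∑ p ∈ cells f a l, (dd k (a + p.1 - p.2 - 1) + dd k (l + p.2 - p.1 - 1))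
      ≤ (m : ℤ) * (dd k 1 + dd k (n₁ - 2)) := by
    have hcard := cells_card h
    calc ∑ p ∈ cells f a l, (dd k (a + p.1 - p.2 - 1) + dd k (l + p.2 - p.1 - 1))
        ≤ (cells f a l).card • (dd k 1 + dd k (n₁ - 2)) := by
          apply Finset.sum_le_card_nsmul
          intro p hp
          simp only [cells, mem_filter, mem_product, mem_Icc] at hp
          obtain ⟨⟨⟨ht1, ht2⟩, hs1, hs2⟩, _⟩ := hp
          have e1 : a + p.1 - p.2 - 1 = (a + p.1 - p.2 - 2) + 1 := by omega
          have e2 : l + p.2 - p.1 - 1 = (l + p.2 - p.1 - 2) + 1 := by omega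
          have e3 : (a + p.1 - p.2 - 2) + (l + p.2 - p.1 - 2) + 1 = n₁ - 2 := by omega
          rw [e1, e2, ← e3]
          exact dd_pair _ _
      _ = (m : ℤ) * (dd k 1 + dd k (n₁ - 2)) := by
          rw [hcard, ← hm, nsmul_eq_mul]
  -- final numeric inequality
  have hfin := finalineq k n₁ m hk hn₁3 hm1
  have hcast : ((n₁ + m : ℕ) : ℤ) = (n₁ : ℤ) + m := by push_cast; ring
  have hgoalR : ((a + l - 1 + m : ℕ) : ℤ) ^ k = ((n₁ : ℤ) + m) ^ k := by
    rw [← hcast]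
  -- assemble
  have hR1 : ∑ j ∈ Icc 1 a, Pw (a + g j - j) = T - ∑ i ∈ Icc 2 l, Pw (i - 1 + (a - f i)) := by
    rw [← rowId]; ring
  have hCl : ∑ i ∈ Icc 2 l, Pw (l + f i - i) = T - Pw n₁ - ∑ j ∈ Icc 2 a, Pw (j - 1 + (l - g j)) := by
    rw [← colId]; ring
  have keyLHS : ∑ j ∈ Icc 1 a, Pw (a + g j - j) + ∑ i ∈ Icc 2 l, Pw (l + f i - i)
      = Pw n₁ + ∑ t ∈ Icc 1 (a - 1), Pw t + ∑ t ∈ Icc 1 (l - 1), Pw t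
        + ∑ p ∈ cells f a l, (dd k (a + p.1 - p.2 - 1) + dd k (l + p.2 - p.1 - 1)) := by
    have hsplit : ∑ p ∈ cells f a l, (dd k (a + p.1 - p.2 - 1) + dd k (l + p.2 - p.1 - 1))
        = ∑ p ∈ cells f a l, dd k (a + p.1 - p.2 - 1)
          + ∑ p ∈ cells f a l, dd k (l + p.2 - p.1 - 1) := Finset.sum_add_distrib
    linarith [hR1, hCl, hT1, hT2, hRow, hCol, hRowCells, hColCells, hsplit]
  rw [hgoalR, hBa, hBl, keyLHS]
  have : Pw (n₁ + m) = ((n₁ : ℤ) + m) ^ k := by rw [hPw]; push_cast; ring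
  simp only [hPw] at *
  linarith

def Hsum (f g : ℕ → ℕ) (l k : ℕ) : ℤ :=
  ∑ i ∈ Icc 1 l, ∑ j ∈ Icc 1 (f i), ((f i : ℤ) + g j - i - j + 1) ^ k

def Csum (f : ℕ → ℕ) (l k : ℕ) : ℤ :=
  ∑ i ∈ Icc 1 l, ∑ j ∈ Icc 1 (f i), |(j : ℤ) - i| ^ k

lemma hooklemma {f g : ℕ → ℕ} {l k : ℕ} (h : PD f g l) (hk1 : 1 ≤ k) (hhook : f 2 ≤ 1) :
    Hsum f g l k = ((∑ i ∈ Icc 1 l, f i : ℕ) : ℤ) ^ k + Csum f l k := by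
  have ha : 1 ≤ f 1 := h.ha
  have hl : 1 ≤ l := h.hl
  have hgl := h.hg1
  have hfi : ∀ i, 2 ≤ i → i ≤ l → f i = 1 := by
    intro i h2 hil
    have h3 := h.f_anti (show (1:ℕ) ≤ 2 by omega) h2
    have h4 := h.f_pos (by omega) hil
    omega
  have hgj : ∀ j, 2 ≤ j → j ≤ f 1 → g j = 1 := by
    intro j h2 hja
    have hg1 : 1 ≤ g j := h.g_pos (by omega) hja
    by_contra hne
    have : j ≤ f 2 := (h.dual 2 j (by omega) (by omega)).2 (by omega)
    omega
  have hn : (∑ i ∈ Icc 1 l, f i) = f 1 + l - 1 := by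
    rw [sum_Icc_split_first hl f]
    have : ∑ i ∈ Icc 2 l, f i = ∑ i ∈ Icc 2 l, 1 := by
      apply Finset.sum_congr rfl
      intro i hi; simp only [mem_Icc] at hi; exact hfi i hi.1 hi.2
    rw [this, Finset.sum_const, Nat.card_Icc]
    simp only [smul_eq_mul, mul_one]; omega
  set W : ℕ → ℤ := fun t => (t : ℤ) ^ k with hW
  set R : ℕ → ℤ := fun i => ∑ j ∈ Icc 1 (f i), ((f i : ℤ) + g j - i - j + 1) ^ k with hR
  set Cc : ℕ → ℤ := fun i => ∑ j ∈ Icc 1 (f i), |(j : ℤ) - i| ^ k with hCc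
  have hrow : R 1 = W (f 1 + l - 1) + ∑ j ∈ Icc 2 (f 1), W (f 1 + 1 - j) := by
    simp only [hR]
    rw [sum_Icc_split_first ha]
    congr 1
    · rw [hgl, show W (f 1 + l - 1) = ((f 1 + l - 1 : ℕ) : ℤ) ^ k from rfl]
      congr 1
      omega
    · apply Finset.sum_congr rfl
      intro j hj
      simp only [mem_Icc] at hj
      have e := hgj j hj.1 hj.2
      rw [show W (f 1 + 1 - j) = ((f 1 + 1 - j : ℕ) : ℤ) ^ k from rfl]
      congr 1
      omega
  have hcol : ∀ i ∈ Icc 2 l, R i = W (l + 1 - i) := by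
    intro i hi
    simp only [mem_Icc] at hi
    simp only [hR]
    rw [hfi i hi.1 hi.2, Finset.Icc_self, Finset.sum_singleton,
      show W (l + 1 - i) = ((l + 1 - i : ℕ) : ℤ) ^ k from rfl]
    congr 1
    omega
  have hcrow : Cc 1 = ∑ j ∈ Icc 1 (f 1), W (j - 1) := by
    simp only [hCc]
    apply Finset.sum_congr rfl
    intro j hj
    simp only [mem_Icc] at hj
    rw [show W (j - 1) = ((j - 1 : ℕ) : ℤ) ^ k from rfl]
    congr 1
    rw [abs_of_nonneg (by omega : (0:ℤ) ≤ (j : ℤ) - ((1:ℕ):ℤ))]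
    omega
  have hccol : ∀ i ∈ Icc 2 l, Cc i = W (i - 1) := by
    intro i hi
    simp only [mem_Icc] at hi
    simp only [hCc]
    rw [hfi i hi.1 hi.2, Finset.Icc_self, Finset.sum_singleton,
      show W (i - 1) = ((i - 1 : ℕ) : ℤ) ^ k from rfl]
    congr 1
    rw [abs_of_nonpos (by omega : ((1:ℕ) : ℤ) - (i : ℤ) ≤ 0)]
    omega
  have eqA : ∑ j ∈ Icc 2 (f 1), W (f 1 + 1 - j) = ∑ j ∈ Icc 1 (f 1), W (j - 1) := by
    have h1 : ∑ j ∈ Icc 2 (f 1), W (f 1 + 1 - j) = ∑ t ∈ Icc 1 (f 1 - 1), W t := by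
      apply Finset.sum_nbij' (fun j => f 1 + 1 - j) (fun t => f 1 + 1 - t)
      · intro x hx; simp only [mem_Icc] at *; omega
      · intro x hx; simp only [mem_Icc] at *; omega
      · intro x hx; simp only [mem_Icc] at *; omega
      · intro x hx; simp only [mem_Icc] at *; omega
      · intro x _; rfl
    have h2 : ∑ j ∈ Icc 1 (f 1), W (j - 1) = ∑ t ∈ Icc 1 (f 1 - 1), W t := by
      rw [sum_Icc_split_first ha (fun j => W (j - 1)), sum_Icc2_shift (f 1) (fun j => W (j - 1))]
      simp [hW, zero_pow (show k ≠ 0 by omega)]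
    rw [h1, h2]
  have eqB : ∑ i ∈ Icc 2 l, W (l + 1 - i) = ∑ i ∈ Icc 2 l, W (i - 1) := by
    have h1 : ∑ i ∈ Icc 2 l, W (l + 1 - i) = ∑ t ∈ Icc 1 (l - 1), W t := by
      apply Finset.sum_nbij' (fun j => l + 1 - j) (fun t => l + 1 - t)
      · intro x hx; simp only [mem_Icc] at *; omega
      · intro x hx; simp only [mem_Icc] at *; omega
      · intro x hx; simp only [mem_Icc] at *; omega
      · intro x hx; simp only [mem_Icc] at *; omega
      · intro x _; rfl
    have h2 : ∑ i ∈ Icc 2 l, W (i - 1) = ∑ t ∈ Icc 1 (l - 1), W t := by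
      rw [sum_Icc2_shift l (fun i => W (i - 1))]; simp
    rw [h1, h2]
  have hH : Hsum f g l k
      = W (f 1 + l - 1) + ∑ j ∈ Icc 2 (f 1), W (f 1 + 1 - j) + ∑ i ∈ Icc 2 l, W (l + 1 - i) := by
    calc Hsum f g l k = R 1 + ∑ i ∈ Icc 2 l, R i := sum_Icc_split_first hl R
      _ = _ := by rw [hrow, Finset.sum_congr rfl hcol]
  have hC : Csum f l k = ∑ j ∈ Icc 1 (f 1), W (j - 1) + ∑ i ∈ Icc 2 l, W (i - 1) := by
    calc Csum f l k = Cc 1 + ∑ i ∈ Icc 2 l, Cc i := sum_Icc_split_first hl Cc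
      _ = _ := by rw [hcrow, Finset.sum_congr rfl hccol]
  rw [hH, hC, show ((∑ i ∈ Icc 1 l, f i : ℕ) : ℤ) ^ k = W (f 1 + l - 1) by rw [hn]]
  linarith [eqA, eqB]

theorem core (n : ℕ) : ∀ (k : ℕ) (f g : ℕ → ℕ) (l : ℕ), 3 ≤ k → PD f g l →
    n = ∑ i ∈ Icc 1 l, f i →
    Hsum f g l k ≤ (n : ℤ) ^ k + Csum f l k ∧
      (Hsum f g l k = (n : ℤ) ^ k + Csum f l k ↔ f 2 ≤ 1) := by
  induction n using Nat.strong_induction_on with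
  | _ n IH =>
    intro k f g l hk h hn
    by_cases hhook : f 2 ≤ 1
    · have heq := hooklemma (k := k) h (by omega) hhook
      rw [← hn] at heq
      exact ⟨le_of_eq heq, ⟨fun _ => hhook, fun _ => heq⟩⟩
    · push_neg at hhook
      have hf2 : 2 ≤ f 2 := hhook
      have ha2 : 2 ≤ f 1 := le_trans hf2 (h.f_le one_le_two)
      have hg22 : 2 ≤ g 2 := (h.dual 2 2 (by omega) (by omega)).1 hf2
      have hl2 : 2 ≤ l := by
        have := (h.dual 2 1 (by omega) (by omega)).1 (by omega)
        rw [h.hg1] at this; exact this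
      set f' : ℕ → ℕ := fun i => f (i + 1) - 1 with hf'
      set g' : ℕ → ℕ := fun j => g (j + 1) - 1 with hg'
      set l' : ℕ := g 2 - 1 with hl'
      have h' : PD f' g' l' := by
        refine ⟨by omega, rfl, ?_, ?_, ?_⟩
        · intro i hi
          have hd := h.dual (i + 1) 2 (by omega) (by omega)
          simp only [hf', hl']
          omega
        · intro j hj
          have hd := h.dual 2 (j + 1) (by omega) (by omega)
          have e2 : f (1 + 1) = f 2 := by norm_num
          simp only [hf', hg']
          omega
        · intro i j hi hj
          have hd := h.dual (i + 1) (j + 1) (by omega) (by omega)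
          simp only [hf', hg']
          omega
      set m : ℕ := ∑ i ∈ Icc 1 l', f' i with hm
      have hl'l : l' ≤ l - 1 := by
        have := h.g_anti (le_refl 1) one_le_two
        rw [h.hg1] at this; omega
      have hpad : ∑ i ∈ Icc 1 (l - 1), f' i = m := by
        rw [hm]
        refine (Finset.sum_subset (Finset.Icc_subset_Icc_right (by omega : l' ≤ l - 1)) ?_).symm
        intro x hx hnx
        simp only [mem_Icc] at hx hnx
        exact h'.f_zero (by omega)
      have hfsucc : ∀ t, 1 ≤ t → t ≤ l - 1 → f (t + 1) = f' t + 1 := by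
        intro t h1 h2
        have := h.f_pos (show 1 ≤ t + 1 by omega) (show t + 1 ≤ l by omega)
        simp only [hf']; omega
      have hnm : n = (f 1 + l - 1) + m := by
        rw [hn, sum_Icc_split_first (by omega : 1 ≤ l) f, sum_Icc2_shift l f]
        have : ∑ t ∈ Icc 1 (l - 1), f (t + 1) = ∑ t ∈ Icc 1 (l - 1), (f' t + 1) := by
          apply Finset.sum_congr rfl
          intro t ht; simp only [mem_Icc] at ht; exact hfsucc t ht.1 ht.2
        rw [this, Finset.sum_add_distrib, Finset.sum_const, Nat.card_Icc, hpad]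
        simp only [smul_eq_mul, mul_one]
        omega
      have hm1 : 1 ≤ m := by
        have h1l' : (1 : ℕ) ∈ Icc 1 l' := by simp only [mem_Icc]; omega
        calc 1 ≤ f' 1 := h'.f_pos le_rfl (by omega)
          _ ≤ m := Finset.single_le_sum (f := f') (fun i _ => Nat.zero_le _) h1l'
      have hmn : m < n := by omega
      have IHm := (IH m hmn k f' g' l' hk h' rfl).1
      -- split Hsum
      have hfpos : ∀ i, 1 ≤ i → i ≤ l → 1 ≤ f i := fun i hi hil => h.f_pos hi hil
      have hsplitH : Hsum f g l k
          = (∑ j ∈ Icc 1 (f 1), ((f 1 : ℤ) + g j - 1 - j + 1) ^ k)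
            + ∑ i ∈ Icc 2 l, ((f i : ℤ) + g 1 - i - 1 + 1) ^ k
            + Hsum f' g' l' k := by
        have step1 : Hsum f g l k
            = (∑ j ∈ Icc 1 (f 1), ((f 1 : ℤ) + g j - ((1:ℕ):ℤ) - j + 1) ^ k)
              + ∑ i ∈ Icc 2 l, ∑ j ∈ Icc 1 (f i), ((f i : ℤ) + g j - i - j + 1) ^ k :=
          sum_Icc_split_first (by omega : 1 ≤ l)
            (fun i => ∑ j ∈ Icc 1 (f i), ((f i : ℤ) + g j - i - j + 1) ^ k)
        have step2 : ∀ i ∈ Icc 2 l, ∑ j ∈ Icc 1 (f i), ((f i : ℤ) + g j - i - j + 1) ^ k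
            = ((f i : ℤ) + g 1 - i - ((1:ℕ):ℤ) + 1) ^ k
              + ∑ j ∈ Icc 2 (f i), ((f i : ℤ) + g j - i - j + 1) ^ k := by
          intro i hi
          simp only [mem_Icc] at hi
          exact sum_Icc_split_first (hfpos i (by omega) hi.2)
            (fun j => ((f i : ℤ) + g j - i - j + 1) ^ k)
        have step3 : ∑ i ∈ Icc 2 l, ∑ j ∈ Icc 2 (f i), ((f i : ℤ) + g j - i - j + 1) ^ k
            = Hsum f' g' l' k := by
          rw [sum_Icc2_shift l (fun i => ∑ j ∈ Icc 2 (f i), ((f i : ℤ) + g j - i - j + 1) ^ k)]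
          have inner : ∀ t ∈ Icc 1 (l - 1),
              ∑ j ∈ Icc 2 (f (t + 1)), ((f (t + 1) : ℤ) + g j - ((t + 1 : ℕ) : ℤ) - j + 1) ^ k
              = ∑ s ∈ Icc 1 (f' t), ((f' t : ℤ) + g' s - t - s + 1) ^ k := by
            intro t ht
            simp only [mem_Icc] at ht
            rw [sum_Icc2_shift (f (t + 1))
              (fun j => ((f (t + 1) : ℤ) + g j - ((t + 1 : ℕ) : ℤ) - j + 1) ^ k)]
            have hft : f (t + 1) - 1 = f' t := rfl
            rw [hft]
            apply Finset.sum_congr rfl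
            intro s hs
            simp only [mem_Icc] at hs
            have hfp : 1 ≤ f (t + 1) := hfpos (t + 1) (by omega) (by omega)
            have hgp : 1 ≤ g (s + 1) := by
              apply h.g_pos (by omega)
              have : s + 1 ≤ f (t + 1) := by simp only [hf'] at hs; omega
              exact le_trans this (h.f_le (by omega))
            congr 1
            simp only [hf', hg']
            omega
          rw [Finset.sum_congr rfl inner]
          rw [Hsum]
          apply (Finset.sum_subset (Finset.Icc_subset_Icc_right hl'l) _).symm
          intro x hx hnx
          simp only [mem_Icc] at hx hnx
          rw [h'.f_zero (by omega)]
          simp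
        rw [step1, Finset.sum_congr rfl step2, Finset.sum_add_distrib, step3]
        push_cast
        ring
      -- split Csum
      have hsplitC : Csum f l k
          = (∑ j ∈ Icc 1 (f 1), |(j : ℤ) - 1| ^ k)
            + ∑ i ∈ Icc 2 l, |((1:ℕ) : ℤ) - i| ^ k
            + Csum f' l' k := by
        have step1 : Csum f l k
            = (∑ j ∈ Icc 1 (f 1), |(j : ℤ) - ((1:ℕ):ℤ)| ^ k)
              + ∑ i ∈ Icc 2 l, ∑ j ∈ Icc 1 (f i), |(j : ℤ) - i| ^ k :=
          sum_Icc_split_first (by omega : 1 ≤ l)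
            (fun i => ∑ j ∈ Icc 1 (f i), |(j : ℤ) - i| ^ k)
        have step2 : ∀ i ∈ Icc 2 l, ∑ j ∈ Icc 1 (f i), |(j : ℤ) - i| ^ k
            = |(((1:ℕ)) : ℤ) - i| ^ k + ∑ j ∈ Icc 2 (f i), |(j : ℤ) - i| ^ k := by
          intro i hi
          simp only [mem_Icc] at hi
          exact sum_Icc_split_first (hfpos i (by omega) hi.2) (fun j => |(j : ℤ) - i| ^ k)
        have step3 : ∑ i ∈ Icc 2 l, ∑ j ∈ Icc 2 (f i), |(j : ℤ) - i| ^ k = Csum f' l' k := by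
          rw [sum_Icc2_shift l (fun i => ∑ j ∈ Icc 2 (f i), |(j : ℤ) - i| ^ k)]
          have inner : ∀ t ∈ Icc 1 (l - 1),
              ∑ j ∈ Icc 2 (f (t + 1)), |(j : ℤ) - ((t + 1 : ℕ) : ℤ)| ^ k
              = ∑ s ∈ Icc 1 (f' t), |(s : ℤ) - t| ^ k := by
            intro t ht
            rw [sum_Icc2_shift (f (t + 1)) (fun j => |(j : ℤ) - ((t + 1 : ℕ) : ℤ)| ^ k)]
            have hft : f (t + 1) - 1 = f' t := rfl
            rw [hft]
            apply Finset.sum_congr rfl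
            intro s _
            congr 1
            push_cast
            ring
          rw [Finset.sum_congr rfl inner]
          rw [Csum]
          apply (Finset.sum_subset (Finset.Icc_subset_Icc_right hl'l) _).symm
          intro x hx hnx
          simp only [mem_Icc] at hx hnx
          rw [h'.f_zero (by omega)]
          simp
        rw [step1, Finset.sum_congr rfl step2, Finset.sum_add_distrib, step3]
        push_cast
        ring
      -- bridge to keylemma
      have hkey := keylemma h hk hf2
      set mk : ℕ := ∑ i ∈ Icc 2 l, (f i - 1) with hmk
      have hmkm : mk = m := by
        rw [hmk, sum_Icc2_shift l (fun i => f i - 1), ← hpad]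
      have bridge1 : ∑ j ∈ Icc 1 (f 1), ((f 1 : ℤ) + g j - 1 - j + 1) ^ k
          = ∑ j ∈ Icc 1 (f 1), ((f 1 + g j - j : ℕ) : ℤ) ^ k := by
        apply Finset.sum_congr rfl
        intro j hj
        simp only [mem_Icc] at hj
        have := h.g_pos hj.1 hj.2
        congr 1
        omega
      have bridge2 : ∑ i ∈ Icc 2 l, ((f i : ℤ) + g 1 - i - 1 + 1) ^ k
          = ∑ i ∈ Icc 2 l, ((l + f i - i : ℕ) : ℤ) ^ k := by
        apply Finset.sum_congr rfl
        intro i hi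
        simp only [mem_Icc] at hi
        have hgl := h.hg1
        congr 1
        omega
      have bridge3 : ∑ j ∈ Icc 1 (f 1), |(j : ℤ) - 1| ^ k
          = ∑ j ∈ Icc 1 (f 1), ((j - 1 : ℕ) : ℤ) ^ k := by
        apply Finset.sum_congr rfl
        intro j hj
        simp only [mem_Icc] at hj
        congr 1
        rw [abs_of_nonneg (by omega : (0:ℤ) ≤ (j : ℤ) - 1)]
        omega
      have bridge4 : ∑ i ∈ Icc 2 l, |((1:ℕ) : ℤ) - i| ^ k
          = ∑ i ∈ Icc 2 l, ((i - 1 : ℕ) : ℤ) ^ k := by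
        apply Finset.sum_congr rfl
        intro i hi
        simp only [mem_Icc] at hi
        congr 1
        rw [abs_of_nonpos (by omega : ((1:ℕ) : ℤ) - (i:ℤ) ≤ 0)]
        omega
      have bridge5 : ((mk : ℕ) : ℤ) ^ k = (m : ℤ) ^ k := by rw [hmkm]
      have bridge6 : ((f 1 + l - 1 + mk : ℕ) : ℤ) ^ k = (n : ℤ) ^ k := by
        congr 1
        omega
      rw [← bridge1, ← bridge2, bridge5, bridge6, ← bridge3, ← bridge4] at hkey
      -- assemble
      have hlt : Hsum f g l k < (n : ℤ) ^ k + Csum f l k := by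
        rw [hsplitH, hsplitC]
        linarith [IHm, hkey]
      exact ⟨le_of_lt hlt, ⟨fun he => absurd he (ne_of_lt hlt), fun h2 => by omega⟩⟩

lemma lower_set {T : Finset ℕ} (h1 : ∀ x ∈ T, 1 ≤ x)
    (h2 : ∀ x ∈ T, ∀ y, 1 ≤ y → y ≤ x → y ∈ T) : T = Icc 1 T.card := by
  rcases T.eq_empty_or_nonempty with he | hne
  · simp [he]
  · have hmax := T.max'_mem hne
    have hT : T = Icc 1 (T.max' hne) := by
      apply Finset.Subset.antisymm
      · intro x hx; simp only [mem_Icc]; exact ⟨h1 x hx, T.le_max' x hx⟩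
      · intro y hy; simp only [mem_Icc] at hy; exact h2 _ hmax y hy.1 hy.2
    have hc : T.card = T.max' hne := by
      have := congrArg Finset.card hT
      rw [Nat.card_Icc] at this
      omega
    rw [hc]
    exact hT

end SHP

lemma young_row_mem {Y : Finset (ℕ × ℕ)} (hY : IsYoung Y) (i j : ℕ) :
    (i, j) ∈ Y ↔ 1 ≤ i ∧ 1 ≤ j ∧ j ≤ row Y i := by
  classical
  obtain ⟨hY1, hY2⟩ := hY
  set T : Finset ℕ := ((Y.filter fun p => p.1 = i).image Prod.snd) with hT
  have hcardT : T.card = row Y i := by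
    rw [hT, row]
    apply Finset.card_image_of_injOn
    intro p hp q hq hpq
    simp only [Finset.coe_filter, Set.mem_setOf_eq] at hp hq
    exact Prod.ext (hp.2.trans hq.2.symm) hpq
  have hmemT : ∀ x, x ∈ T ↔ (i, x) ∈ Y := by
    intro x
    simp only [hT, Finset.mem_image, Finset.mem_filter]
    constructor
    · rintro ⟨⟨p1, p2⟩, ⟨hpY, hp1⟩, hp2⟩
      simp only at hp1 hp2
      subst hp1; subst hp2; exact hpY
    · intro hx; exact ⟨(i, x), ⟨hx, rfl⟩, rfl⟩
  have hTeq : T = Icc 1 T.card := by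
    apply SHP.lower_set
    · intro x hx; exact (hY1 _ ((hmemT x).1 hx)).2
    · intro x hx y hy hyx
      have hx' := (hmemT x).1 hx
      exact (hmemT y).2 (hY2 _ hx' (i, y) (hY1 _ hx').1 hy le_rfl hyx)
  constructor
  · intro hij
    refine ⟨(hY1 _ hij).1, (hY1 _ hij).2, ?_⟩
    have hjT : j ∈ T := (hmemT j).2 hij
    rw [hTeq] at hjT
    simp only [mem_Icc] at hjT
    omega
  · rintro ⟨hi, hj, hjr⟩
    apply (hmemT j).1
    rw [hTeq]
    simp only [mem_Icc]
    omega

lemma young_col_mem {Y : Finset (ℕ × ℕ)} (hY : IsYoung Y) (i j : ℕ) :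
    (i, j) ∈ Y ↔ 1 ≤ i ∧ 1 ≤ j ∧ i ≤ col Y j := by
  classical
  obtain ⟨hY1, hY2⟩ := hY
  set T : Finset ℕ := ((Y.filter fun p => p.2 = j).image Prod.fst) with hT
  have hcardT : T.card = col Y j := by
    rw [hT, col]
    apply Finset.card_image_of_injOn
    intro p hp q hq hpq
    simp only [Finset.coe_filter, Set.mem_setOf_eq] at hp hq
    exact Prod.ext hpq (hp.2.trans hq.2.symm)
  have hmemT : ∀ x, x ∈ T ↔ (x, j) ∈ Y := by
    intro x
    simp only [hT, Finset.mem_image, Finset.mem_filter]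
    constructor
    · rintro ⟨⟨p1, p2⟩, ⟨hpY, hp2⟩, hp1⟩
      simp only at hp1 hp2
      subst hp1; subst hp2; exact hpY
    · intro hx; exact ⟨(x, j), ⟨hx, rfl⟩, rfl⟩
  have hTeq : T = Icc 1 T.card := by
    apply SHP.lower_set
    · intro x hx; exact (hY1 _ ((hmemT x).1 hx)).1
    · intro x hx y hy hyx
      have hx' := (hmemT x).1 hx
      exact (hmemT y).2 (hY2 _ hx' (y, j) hy (hY1 _ hx').2 hyx le_rfl)
  constructor
  · intro hij
    refine ⟨(hY1 _ hij).1, (hY1 _ hij).2, ?_⟩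
    have hjT : i ∈ T := (hmemT i).2 hij
    rw [hTeq] at hjT
    simp only [mem_Icc] at hjT
    omega
  · rintro ⟨hi, hj, hjr⟩
    apply (hmemT i).1
    rw [hTeq]
    simp only [mem_Icc]
    omega

theorem sum_hook_pow_le (n : ℕ) (hn : 0 < n) (Y : Finset (ℕ × ℕ))
    (hY : IsYoung Y) (hcard : Y.card = n) (k : ℕ) (hk3 : 3 ≤ k) :
    (∑ u ∈ Y, (hk Y u) ^ k ≤ (n : ℤ) ^ k + ∑ u ∈ Y, |ct u| ^ k) ∧
      ((∑ u ∈ Y, (hk Y u) ^ k = (n : ℤ) ^ k + ∑ u ∈ Y, |ct u| ^ k) ↔ IsHook Y) := by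
  classical
  have hrm := young_row_mem hY
  have hcm := young_col_mem hY
  set L : ℕ → ℕ := fun i => row Y i with hL
  set G : ℕ → ℕ := fun j => col Y j with hG
  have hYne : Y.Nonempty := by rw [← Finset.card_pos, hcard]; exact hn
  obtain ⟨p0, hp0⟩ := hYne
  have h11 : (1, 1) ∈ Y :=
    hY.2 p0 hp0 (1, 1) le_rfl le_rfl (hY.1 p0 hp0).1 (hY.1 p0 hp0).2
  have hG1 : 1 ≤ G 1 := ((hcm 1 1).1 h11).2.2
  have hpd : SHP.PD L G (G 1) := by
    refine ⟨hG1, rfl, ?_, ?_, ?_⟩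
    · intro i hi
      constructor
      · intro hLi; exact ((hcm i 1).1 ((hrm i 1).2 ⟨hi, le_rfl, hLi⟩)).2.2
      · intro hiG; exact ((hrm i 1).1 ((hcm i 1).2 ⟨hi, le_rfl, hiG⟩)).2.2
    · intro j hj
      constructor
      · intro hGj; exact ((hrm 1 j).1 ((hcm 1 j).2 ⟨le_rfl, hj, hGj⟩)).2.2
      · intro hjL; exact ((hcm 1 j).1 ((hrm 1 j).2 ⟨le_rfl, hj, hjL⟩)).2.2
    · intro i j hi hj
      constructor
      · intro hfi; exact ((hcm i j).1 ((hrm i j).2 ⟨hi, hj, hfi⟩)).2.2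
      · intro hgj; exact ((hrm i j).1 ((hcm i j).2 ⟨hi, hj, hgj⟩)).2.2
  have hLpos : ∀ i, 1 ≤ L i → 1 ≤ i := by
    intro i hLi
    have hne : (Y.filter fun p => p.1 = i).Nonempty := Finset.card_pos.1 hLi
    obtain ⟨p, hp⟩ := hne
    simp only [Finset.mem_filter] at hp
    have := (hY.1 p hp.1).1
    omega
  have hmaps : ∀ p ∈ Y, p.1 ∈ Icc 1 (G 1) := by
    intro p hp
    have h1 := hY.1 p hp
    have hp1 : (p.1, 1) ∈ Y := hY.2 p hp (p.1, 1) h1.1 le_rfl le_rfl h1.2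
    simp only [mem_Icc]
    exact ⟨h1.1, ((hcm p.1 1).1 hp1).2.2⟩
  have hfiber : ∀ i, Y.filter (fun p => p.1 = i) = (Icc 1 (L i)).image (fun j => (i, j)) := by
    intro i
    ext p
    simp only [Finset.mem_filter, Finset.mem_image, mem_Icc]
    constructor
    · rintro ⟨hpY, hpi⟩
      rcases p with ⟨p1, p2⟩
      simp only at hpi
      subst hpi
      have hm := (hrm p1 p2).1 hpY
      exact ⟨p2, ⟨hm.2.1, hm.2.2⟩, rfl⟩
    · rintro ⟨j, hj, rfl⟩
      exact ⟨(hrm i j).2 ⟨hLpos i (by omega), hj.1, hj.2⟩, rfl⟩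
  have hsum_split : ∀ F : ℕ × ℕ → ℤ,
      ∑ u ∈ Y, F u = ∑ i ∈ Icc 1 (G 1), ∑ j ∈ Icc 1 (L i), F (i, j) := by
    intro F
    rw [← Finset.sum_fiberwise_of_maps_to hmaps F]
    apply Finset.sum_congr rfl
    intro i _
    rw [hfiber i, Finset.sum_image]
    intro x _ y _ hxy
    simpa using congrArg Prod.snd hxy
  have hn' : n = ∑ i ∈ Icc 1 (G 1), L i := by
    rw [← hcard, Finset.card_eq_sum_card_fiberwise hmaps]
    rfl
  have hH : ∑ u ∈ Y, (hk Y u) ^ k = SHP.Hsum L G (G 1) k := by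
    rw [hsum_split (fun u => (hk Y u) ^ k)]
    rfl
  have hC : ∑ u ∈ Y, |ct u| ^ k = SHP.Csum L (G 1) k := by
    rw [hsum_split (fun u => |ct u| ^ k)]
    rfl
  have hcore := SHP.core n k L G (G 1) hk3 hpd hn'
  have hhook_iff : L 2 ≤ 1 ↔ IsHook Y := by
    constructor
    · intro h2 i hi
      exact le_trans (hpd.f_anti one_le_two hi) h2
    · intro hHk; exact hHk 2 le_rfl
  rw [hH, hC]
  exact ⟨hcore.1, hcore.2.trans hhook_iff⟩
end

section
/- For any partition λ of a positive integer n, Σ_{u∈λ} h(u) ≥ n + Σ_{u∈λ} |c(u)|, with equality if and only if λ is a hook. -/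
open Finset

lemma lowerset_eq_Icc (S : Finset ℕ) (hpos : ∀ j ∈ S, 1 ≤ j)
    (hdown : ∀ j ∈ S, ∀ k, 1 ≤ k → k ≤ j → k ∈ S) : S = Icc 1 S.card := by
  rcases S.eq_empty_or_nonempty with h | h
  · simp [h]
  · obtain ⟨m, hm⟩ : ∃ m, S = Icc 1 m := ⟨S.max' h, by
      apply Finset.Subset.antisymm
      · intro j hj
        exact Finset.mem_Icc.2 ⟨hpos j hj, S.le_max' j hj⟩
      · intro k hk
        rw [Finset.mem_Icc] at hk
        exact hdown _ (S.max'_mem h) k hk.1 hk.2⟩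
    rw [hm, Nat.card_Icc]
    congr 1

lemma mem_iff_row (Y : Finset (ℕ × ℕ)) (hY : IsYoung Y) (p : ℕ × ℕ) :
    p ∈ Y ↔ 1 ≤ p.2 ∧ p.2 ≤ row Y p.1 := by
  set S := (Y.filter fun q => q.1 = p.1).image Prod.snd with hSdef
  have hmem : ∀ j, j ∈ S ↔ (p.1, j) ∈ Y := by
    intro j
    simp only [hSdef, Finset.mem_image, Finset.mem_filter]
    constructor
    · rintro ⟨q, ⟨hqY, hq1⟩, hq2⟩
      have : q = (p.1, j) := by rw [Prod.ext_iff]; exact ⟨hq1, hq2⟩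
      rwa [this] at hqY
    · intro h; exact ⟨(p.1, j), ⟨h, rfl⟩, rfl⟩
  have hcard : S.card = row Y p.1 := by
    rw [hSdef, row, Finset.card_image_of_injOn]
    intro a ha b hb hab
    simp only [Finset.coe_filter, Set.mem_setOf_eq] at ha hb
    exact Prod.ext (ha.2.trans hb.2.symm) hab
  have hS : S = Icc 1 (row Y p.1) := by
    rw [← hcard]
    apply lowerset_eq_Icc
    · intro j hj; exact (hY.1 _ ((hmem j).1 hj)).2
    · intro j hj k hk1 hkj
      have hj' := (hmem j).1 hj
      refine (hmem k).2 (hY.2 _ hj' (p.1, k) (hY.1 _ hj').1 hk1 le_rfl hkj)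
  have h2 := hmem p.2
  rw [hS, Finset.mem_Icc] at h2
  exact h2.symm

lemma mem_iff_col (Y : Finset (ℕ × ℕ)) (hY : IsYoung Y) (p : ℕ × ℕ) :
    p ∈ Y ↔ 1 ≤ p.1 ∧ p.1 ≤ col Y p.2 := by
  set S := (Y.filter fun q => q.2 = p.2).image Prod.fst with hSdef
  have hmem : ∀ i, i ∈ S ↔ (i, p.2) ∈ Y := by
    intro i
    simp only [hSdef, Finset.mem_image, Finset.mem_filter]
    constructor
    · rintro ⟨q, ⟨hqY, hq2⟩, hq1⟩
      have : q = (i, p.2) := by rw [Prod.ext_iff]; exact ⟨hq1, hq2⟩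
      rwa [this] at hqY
    · intro h; exact ⟨(i, p.2), ⟨h, rfl⟩, rfl⟩
  have hcard : S.card = col Y p.2 := by
    rw [hSdef, col, Finset.card_image_of_injOn]
    intro a ha b hb hab
    simp only [Finset.coe_filter, Set.mem_setOf_eq] at ha hb
    exact Prod.ext hab (ha.2.trans hb.2.symm)
  have hS : S = Icc 1 (col Y p.2) := by
    rw [← hcard]
    apply lowerset_eq_Icc
    · intro i hi; exact (hY.1 _ ((hmem i).1 hi)).1
    · intro i hi k hk1 hki
      have hi' := (hmem i).1 hi
      refine (hmem k).2 (hY.2 _ hi' (k, p.2) hk1 (hY.1 _ hi').2 hki le_rfl)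
  have h2 := hmem p.1
  rw [hS, Finset.mem_Icc] at h2
  exact h2.symm
lemma card_row_seg (Y : Finset (ℕ × ℕ)) (hY : IsYoung Y) {u : ℕ × ℕ} (hu : u ∈ Y) :
    (Y.filter fun v => v.1 = u.1 ∧ v.2 ≤ u.2).card = u.2 := by
  have hu2 := (mem_iff_row Y hY u).1 hu
  have : Y.filter (fun v => v.1 = u.1 ∧ v.2 ≤ u.2)
      = (Icc 1 u.2).image (fun j => (u.1, j)) := by
    ext v
    simp only [Finset.mem_filter, Finset.mem_image, Finset.mem_Icc]
    constructor
    · rintro ⟨hvY, hv1, hv2⟩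
      exact ⟨v.2, ⟨((mem_iff_row Y hY v).1 hvY).1, hv2⟩, by rw [Prod.ext_iff]; exact ⟨hv1.symm, rfl⟩⟩
    · rintro ⟨j, ⟨hj1, hj2⟩, rfl⟩
      refine ⟨(mem_iff_row Y hY _).2 ⟨hj1, ?_⟩, rfl, hj2⟩
      exact le_trans hj2 hu2.2
  rw [this, Finset.card_image_of_injective _ (by intro a b hab; simpa [Prod.ext_iff] using hab),
    Nat.card_Icc]
  omega

lemma card_col_seg (Y : Finset (ℕ × ℕ)) (hY : IsYoung Y) {u : ℕ × ℕ} (hu : u ∈ Y) :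
    (Y.filter fun v => v.2 = u.2 ∧ v.1 ≤ u.1).card = u.1 := by
  have hu1 := (mem_iff_col Y hY u).1 hu
  have : Y.filter (fun v => v.2 = u.2 ∧ v.1 ≤ u.1)
      = (Icc 1 u.1).image (fun i => (i, u.2)) := by
    ext v
    simp only [Finset.mem_filter, Finset.mem_image, Finset.mem_Icc]
    constructor
    · rintro ⟨hvY, hv2, hv1⟩
      exact ⟨v.1, ⟨((mem_iff_col Y hY v).1 hvY).1, hv1⟩, by rw [Prod.ext_iff]; exact ⟨rfl, hv2.symm⟩⟩
    · rintro ⟨i, ⟨hi1, hi2⟩, rfl⟩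
      refine ⟨(mem_iff_col Y hY _).2 ⟨hi1, ?_⟩, rfl, hi2⟩
      exact le_trans hi2 hu1.2
  rw [this, Finset.card_image_of_injective _ (by intro a b hab; simpa [Prod.ext_iff] using hab),
    Nat.card_Icc]
  omega

lemma hk_eq (Y : Finset (ℕ × ℕ)) (hY : IsYoung Y) {u : ℕ × ℕ} (hu : u ∈ Y) :
    hk Y u = ((Y.filter fun v => v.1 = u.1 ∧ u.2 < v.2).card : ℤ)
           + ((Y.filter fun v => v.2 = u.2 ∧ u.1 < v.1).card : ℤ) + 1 := by
  have h1 : row Y u.1 = u.2 + (Y.filter fun v => v.1 = u.1 ∧ u.2 < v.2).card := by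
    rw [row, ← Finset.card_filter_add_card_filter_not (s := Y.filter fun p => p.1 = u.1)
      (fun v => v.2 ≤ u.2), Finset.filter_filter, Finset.filter_filter, card_row_seg Y hY hu]
    simp only [not_le]
  have h2 : col Y u.2 = u.1 + (Y.filter fun v => v.2 = u.2 ∧ u.1 < v.1).card := by
    rw [col, ← Finset.card_filter_add_card_filter_not (s := Y.filter fun p => p.2 = u.2)
      (fun v => v.1 ≤ u.1), Finset.filter_filter, Finset.filter_filter, card_col_seg Y hY hu]
    simp only [not_le]
  rw [hk, h1, h2]
  push_cast
  ring

lemma ct_eq (Y : Finset (ℕ × ℕ)) (hY : IsYoung Y) {u : ℕ × ℕ} (hu : u ∈ Y) :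
    |ct u| = ((Y.filter fun v => v.1 = u.1 ∧ v.1 < v.2 ∧ v.2 ≤ u.2).card : ℤ)
           + ((Y.filter fun v => v.2 = u.2 ∧ v.2 ≤ v.1 ∧ v.1 < u.1).card : ℤ) := by
  have hu2 := (mem_iff_row Y hY u).1 hu
  have hu1 := (mem_iff_col Y hY u).1 hu
  rcases lt_or_ge u.1 u.2 with h | h
  · have e1 : Y.filter (fun v => v.1 = u.1 ∧ v.1 < v.2 ∧ v.2 ≤ u.2)
        = (Ioc u.1 u.2).image (fun j => (u.1, j)) := by
      ext v
      simp only [Finset.mem_filter, Finset.mem_image, Finset.mem_Ioc]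
      constructor
      · rintro ⟨hvY, hv1, hlt, hle⟩
        exact ⟨v.2, ⟨hv1 ▸ hlt, hle⟩, by rw [Prod.ext_iff]; exact ⟨hv1.symm, rfl⟩⟩
      · rintro ⟨j, ⟨hj1, hj2⟩, rfl⟩
        exact ⟨(mem_iff_row Y hY _).2 ⟨by omega, le_trans hj2 hu2.2⟩, rfl, hj1, hj2⟩
    have e2 : Y.filter (fun v => v.2 = u.2 ∧ v.2 ≤ v.1 ∧ v.1 < u.1) = ∅ := by
      apply Finset.filter_false_of_mem
      intro v _
      rintro ⟨hv2, hle, hlt⟩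
      omega
    rw [e1, e2, Finset.card_image_of_injective _ (by intro a b hab; simpa [Prod.ext_iff] using hab),
      Nat.card_Ioc, ct, Finset.card_empty]
    rw [abs_of_nonneg (by omega : (0:ℤ) ≤ (u.2:ℤ) - u.1)]
    push_cast [Nat.cast_sub (le_of_lt h)]
    ring
  · have e1 : Y.filter (fun v => v.1 = u.1 ∧ v.1 < v.2 ∧ v.2 ≤ u.2) = ∅ := by
      apply Finset.filter_false_of_mem
      intro v _
      rintro ⟨hv1, hlt, hle⟩
      omega
    have e2 : Y.filter (fun v => v.2 = u.2 ∧ v.2 ≤ v.1 ∧ v.1 < u.1)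
        = (Ico u.2 u.1).image (fun i => (i, u.2)) := by
      ext v
      simp only [Finset.mem_filter, Finset.mem_image, Finset.mem_Ico]
      constructor
      · rintro ⟨hvY, hv2, hle, hlt⟩
        exact ⟨v.1, ⟨hv2 ▸ hle, hlt⟩, by rw [Prod.ext_iff]; exact ⟨rfl, hv2.symm⟩⟩
      · rintro ⟨i, ⟨hi1, hi2⟩, rfl⟩
        refine ⟨(mem_iff_col Y hY _).2 ⟨by omega, ?_⟩, rfl, hi1, hi2⟩
        exact le_trans (le_of_lt hi2) hu1.2
    rw [e1, e2, Finset.card_image_of_injective _ (by intro a b hab; simpa [Prod.ext_iff] using hab),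
      Nat.card_Ico, ct, Finset.card_empty]
    rw [abs_of_nonpos (by omega : ((u.2:ℤ) - u.1) ≤ 0)]
    push_cast [Nat.cast_sub h]
    ring
lemma sum_card_eq (Y : Finset (ℕ × ℕ)) (P : ℕ × ℕ → ℕ × ℕ → Prop)
    [∀ u v, Decidable (P u v)] :
    ∑ u ∈ Y, (Y.filter (P u)).card = ((Y ×ˢ Y).filter fun w => P w.1 w.2).card := by
  rw [Finset.card_filter, Finset.sum_product]
  refine Finset.sum_congr rfl fun u _ => ?_
  rw [Finset.card_filter]

lemma card_filter_swap (Y : Finset (ℕ × ℕ)) (Q : (ℕ × ℕ) × (ℕ × ℕ) → Prop)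
    [DecidablePred Q] :
    ((Y ×ˢ Y).filter Q).card = ((Y ×ˢ Y).filter fun w => Q (w.2, w.1)).card := by
  apply Finset.card_nbij' (fun w => (w.2, w.1)) (fun w => (w.2, w.1))
  · intro a ha
    simp only [Finset.mem_coe, Finset.mem_filter, Finset.mem_product] at *
    exact ⟨⟨ha.1.2, ha.1.1⟩, ha.2⟩
  · intro a ha
    simp only [Finset.mem_coe, Finset.mem_filter, Finset.mem_product] at *
    exact ⟨⟨ha.1.2, ha.1.1⟩, ha.2⟩
  · intro a _; rfl
  · intro a _; rfl

lemma filter_card_congr {α : Type*} (s : Finset α) (p q : α → Prop)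
    [DecidablePred p] [DecidablePred q] (h : ∀ a ∈ s, p a ↔ q a) :
    (s.filter p).card = (s.filter q).card := by
  rw [Finset.filter_congr h]

lemma card_filter_split {α : Type*} (s : Finset α) (p q : α → Prop)
    [DecidablePred p] [DecidablePred q] :
    (s.filter p).card
      = (s.filter fun a => p a ∧ q a).card + (s.filter fun a => p a ∧ ¬ q a).card := by
  rw [← Finset.filter_filter, ← Finset.filter_filter,
    Finset.card_filter_add_card_filter_not]

lemma card_diag (Y : Finset (ℕ × ℕ)) :
    (((Y ×ˢ Y).filter fun w =>
        (w.2.1 = w.1.1 ∧ w.2.1 < w.2.2 ∧ w.2.2 ≤ w.1.2) ∧ ¬ w.2.2 < w.1.2).card)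
      = (Y.filter fun u => u.1 < u.2).card := by
  apply Finset.card_nbij' (fun w => w.1) (fun u => (u, u))
  · intro a ha
    simp only [Finset.mem_coe, Finset.mem_filter, Finset.mem_product] at *
    exact ⟨ha.1.1, by omega⟩
  · intro a ha
    simp only [Finset.mem_coe, Finset.mem_filter] at ha
    refine Finset.mem_filter.2 ⟨Finset.mem_product.2 ⟨ha.1, ha.1⟩, ⟨rfl, ha.2, le_rfl⟩, lt_irrefl a.2⟩
  · intro a ha
    simp only [Finset.mem_coe, Finset.mem_filter, Finset.mem_product] at ha
    have h2 : a.2 = a.1 := Prod.ext (by omega) (by omega)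
    rw [Prod.ext_iff]
    exact ⟨rfl, h2.symm⟩
  · intro a _; rfl
theorem sum_hook_ge (n : ℕ) (hn : 0 < n) (Y : Finset (ℕ × ℕ))
    (hY : IsYoung Y) (hcard : Y.card = n) :
    ((n : ℤ) + ∑ u ∈ Y, |ct u| ≤ ∑ u ∈ Y, hk Y u) ∧
      ((∑ u ∈ Y, hk Y u = (n : ℤ) + ∑ u ∈ Y, |ct u|) ↔ IsHook Y) := by
  classical
  -- Σ hk = n + (#arms) + (#legs) as pair counts over Y ×ˢ Y
  have hhk : ∑ u ∈ Y, hk Y u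
      = (n : ℤ) + (((Y ×ˢ Y).filter fun w => w.2.1 = w.1.1 ∧ w.1.2 < w.2.2).card : ℤ)
        + (((Y ×ˢ Y).filter fun w => w.2.2 = w.1.2 ∧ w.1.1 < w.2.1).card : ℤ) := by
    rw [Finset.sum_congr rfl fun u hu => hk_eq Y hY hu]
    rw [Finset.sum_add_distrib, Finset.sum_add_distrib, Finset.sum_const, hcard]
    rw [← Nat.cast_sum, ← Nat.cast_sum,
      sum_card_eq Y (fun u v => v.1 = u.1 ∧ u.2 < v.2),
      sum_card_eq Y (fun u v => v.2 = u.2 ∧ u.1 < v.1)]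
    push_cast
    ring
  have hct : ∑ u ∈ Y, |ct u|
      = (((Y ×ˢ Y).filter fun w => w.2.1 = w.1.1 ∧ w.2.1 < w.2.2 ∧ w.2.2 ≤ w.1.2).card : ℤ)
        + (((Y ×ˢ Y).filter fun w => w.2.2 = w.1.2 ∧ w.2.2 ≤ w.2.1 ∧ w.2.1 < w.1.1).card : ℤ) := by
    rw [Finset.sum_congr rfl fun u hu => ct_eq Y hY hu, Finset.sum_add_distrib,
      ← Nat.cast_sum, ← Nat.cast_sum,
      sum_card_eq Y (fun u v => v.1 = u.1 ∧ v.1 < v.2 ∧ v.2 ≤ u.2),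
      sum_card_eq Y (fun u v => v.2 = u.2 ∧ v.2 ≤ v.1 ∧ v.1 < u.1)]
  -- swap symmetry
  have hA : ((Y ×ˢ Y).filter fun w => w.2.1 = w.1.1 ∧ w.1.2 < w.2.2).card
      = ((Y ×ˢ Y).filter fun w => w.2.1 = w.1.1 ∧ w.2.2 < w.1.2).card := by
    rw [card_filter_swap Y (fun w => w.2.1 = w.1.1 ∧ w.1.2 < w.2.2)]
    exact filter_card_congr _ _ _ fun a _ => by
      constructor <;> (rintro ⟨h1, h2⟩; exact ⟨h1.symm, h2⟩)
  have hB : ((Y ×ˢ Y).filter fun w => w.2.2 = w.1.2 ∧ w.1.1 < w.2.1).card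
      = ((Y ×ˢ Y).filter fun w => w.2.2 = w.1.2 ∧ w.2.1 < w.1.1).card := by
    rw [card_filter_swap Y (fun w => w.2.2 = w.1.2 ∧ w.1.1 < w.2.1)]
    exact filter_card_congr _ _ _ fun a _ => by
      constructor <;> (rintro ⟨h1, h2⟩; exact ⟨h1.symm, h2⟩)
  -- splits
  have hsplitA : ((Y ×ˢ Y).filter fun w => w.2.1 = w.1.1 ∧ w.2.2 < w.1.2).card
      = ((Y ×ˢ Y).filter fun w => (w.2.1 = w.1.1 ∧ w.2.2 < w.1.2) ∧ w.2.1 < w.2.2).card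
        + ((Y ×ˢ Y).filter fun w => (w.2.1 = w.1.1 ∧ w.2.2 < w.1.2) ∧ ¬ w.2.1 < w.2.2).card :=
    card_filter_split _ _ _
  have hsplitC1 : ((Y ×ˢ Y).filter fun w => w.2.1 = w.1.1 ∧ w.2.1 < w.2.2 ∧ w.2.2 ≤ w.1.2).card
      = ((Y ×ˢ Y).filter fun w =>
          (w.2.1 = w.1.1 ∧ w.2.1 < w.2.2 ∧ w.2.2 ≤ w.1.2) ∧ w.2.2 < w.1.2).card
        + ((Y ×ˢ Y).filter fun w =>
          (w.2.1 = w.1.1 ∧ w.2.1 < w.2.2 ∧ w.2.2 ≤ w.1.2) ∧ ¬ w.2.2 < w.1.2).card :=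
    card_filter_split _ _ _
  have hP0 : ((Y ×ˢ Y).filter fun w =>
        (w.2.1 = w.1.1 ∧ w.2.1 < w.2.2 ∧ w.2.2 ≤ w.1.2) ∧ w.2.2 < w.1.2).card
      = ((Y ×ˢ Y).filter fun w => (w.2.1 = w.1.1 ∧ w.2.2 < w.1.2) ∧ w.2.1 < w.2.2).card :=
    filter_card_congr _ _ _ fun a _ => by omega
  have hdiag := card_diag Y
  have hsplitB : ((Y ×ˢ Y).filter fun w => w.2.2 = w.1.2 ∧ w.2.1 < w.1.1).card
      = ((Y ×ˢ Y).filter fun w => (w.2.2 = w.1.2 ∧ w.2.1 < w.1.1) ∧ w.2.2 ≤ w.2.1).card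
        + ((Y ×ˢ Y).filter fun w => (w.2.2 = w.1.2 ∧ w.2.1 < w.1.1) ∧ ¬ w.2.2 ≤ w.2.1).card :=
    card_filter_split _ _ _
  have hC2 : ((Y ×ˢ Y).filter fun w => (w.2.2 = w.1.2 ∧ w.2.1 < w.1.1) ∧ w.2.2 ≤ w.2.1).card
      = ((Y ×ˢ Y).filter fun w => w.2.2 = w.1.2 ∧ w.2.2 ≤ w.2.1 ∧ w.2.1 < w.1.1).card :=
    filter_card_congr _ _ _ fun a _ => by omega
  -- T ≤ S1 via u ↦ (u, (u.1, u.1))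
  have hT : (Y.filter fun u => u.1 < u.2).card
      ≤ ((Y ×ˢ Y).filter fun w => (w.2.1 = w.1.1 ∧ w.2.2 < w.1.2) ∧ ¬ w.2.1 < w.2.2).card := by
    apply Finset.card_le_card_of_injOn (fun u => (u, (u.1, u.1)))
    · intro u hu
      simp only [Finset.mem_coe, Finset.mem_filter] at hu
      refine Finset.mem_filter.2 ⟨Finset.mem_product.2 ⟨hu.1, ?_⟩, ⟨rfl, hu.2⟩, lt_irrefl u.1⟩
      exact hY.2 u hu.1 (u.1, u.1) (hY.1 u hu.1).1 (hY.1 u hu.1).1 le_rfl (le_of_lt hu.2)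
    · intro a _ b _ hab
      exact congrArg Prod.fst hab
  constructor
  · rw [hct]
    omega
  constructor
  · intro heq
    rw [hhk, hct] at heq
    by_contra hnh
    unfold IsHook at hnh
    push_neg at hnh
    obtain ⟨i, hi2, hrow⟩ := hnh
    have hi2Y : (i, 2) ∈ Y := by
      refine (mem_iff_row Y hY (i, 2)).2 ⟨by omega, ?_⟩
      show (2 : ℕ) ≤ row Y i
      omega
    have h22 : ((2 : ℕ), (2 : ℕ)) ∈ Y :=
      hY.2 _ hi2Y (2, 2) (by omega) (by omega) hi2 le_rfl
    have h12 : ((1 : ℕ), (2 : ℕ)) ∈ Y :=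
      hY.2 _ h22 (1, 2) (by omega) (by omega) (by omega) le_rfl
    have hmem : (((2, 2), (1, 2)) : (ℕ × ℕ) × (ℕ × ℕ))
        ∈ (Y ×ˢ Y).filter fun w => (w.2.2 = w.1.2 ∧ w.2.1 < w.1.1) ∧ ¬ w.2.2 ≤ w.2.1 :=
      Finset.mem_filter.2 ⟨Finset.mem_product.2 ⟨h22, h12⟩, ⟨rfl, by decide⟩, by decide⟩
    have hpos : 1 ≤ ((Y ×ˢ Y).filter fun w =>
        (w.2.2 = w.1.2 ∧ w.2.1 < w.1.1) ∧ ¬ w.2.2 ≤ w.2.1).card :=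
      Finset.card_pos.2 ⟨_, hmem⟩
    omega
  · intro hhook
    have hkey : ∀ w ∈ (Y ×ˢ Y).filter
        (fun w => (w.2.1 = w.1.1 ∧ w.2.2 < w.1.2) ∧ ¬ w.2.1 < w.2.2),
        w.1.1 = 1 ∧ 1 < w.1.2 ∧ w.2 = ((1 : ℕ), (1 : ℕ)) := by
      intro w hw
      simp only [Finset.mem_filter, Finset.mem_product] at hw
      obtain ⟨⟨hw1Y, hw2Y⟩, ⟨heq1, hlt⟩, hnlt⟩ := hw
      have h1 : 1 ≤ w.2.2 := (hY.1 _ hw2Y).2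
      have hrow := (mem_iff_row Y hY w.1).1 hw1Y
      have h11 : w.1.1 = 1 := by
        by_contra hc
        have h2 : 2 ≤ w.1.1 := by have := (hY.1 _ hw1Y).1; omega
        have := hhook w.1.1 h2
        omega
      refine ⟨h11, by omega, Prod.ext (by omega) (by omega)⟩
    have hS1le : ((Y ×ˢ Y).filter fun w =>
          (w.2.1 = w.1.1 ∧ w.2.2 < w.1.2) ∧ ¬ w.2.1 < w.2.2).card
        ≤ (Y.filter fun u => u.1 < u.2).card := by
      apply Finset.card_le_card_of_injOn (fun w => w.1)
      · intro w hw
        have hk := hkey w hw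
        simp only [Finset.mem_coe, Finset.mem_filter, Finset.mem_product] at hw
        exact Finset.mem_filter.2 ⟨hw.1.1, by beta_reduce; omega⟩
      · intro a ha b hb hab
        have hka := (hkey a ha).2.2
        have hkb := (hkey b hb).2.2
        exact Prod.ext hab (hka.trans hkb.symm)
    have hS2e : ((Y ×ˢ Y).filter fun w =>
        (w.2.2 = w.1.2 ∧ w.2.1 < w.1.1) ∧ ¬ w.2.2 ≤ w.2.1).card = 0 := by
      rw [Finset.card_eq_zero]
      apply Finset.filter_false_of_mem
      intro w hw
      rw [Finset.mem_product] at hw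
      rintro ⟨⟨heq1, hlt⟩, hnle⟩
      have h1 : 1 ≤ w.2.1 := (hY.1 _ hw.2).1
      have hrow := (mem_iff_row Y hY w.1).1 hw.1
      have h2 : 2 ≤ w.1.1 := by omega
      have := hhook w.1.1 h2
      omega
    rw [hhk, hct]
    omega
end

section
/- For any partition λ of n, the number of rectangles in the Young diagram of λ equals Σ_{u∈λ} h(u) + (1/2) Σ_{u∈λ} h̃(u)², where h̃(u) is the partial hook length of u; equivalently, 2 Σ_{u=(i,j)∈λ} ij = 2 Σ_{u∈λ} h(u) + Σ_{u∈λ} h̃(u)². -/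
open Finset

/-- Rectangles contained in the Young diagram, encoded by the pair
(north-west corner, south-east corner); such a rectangle lies in `Y`
iff its south-east corner does (and the NW corner is a cell). -/
def rects (Y : Finset (ℕ × ℕ)) : Finset ((ℕ × ℕ) × ℕ × ℕ) :=
  (Y ×ˢ Y).filter fun pq => pq.1.1 ≤ pq.2.1 ∧ pq.1.2 ≤ pq.2.2

/-- Partial hook length: `0` on the diagonal, the arm `λ_i - j` below it,
and the leg `λ'_j - i` above it. -/
def phk (Y : Finset (ℕ × ℕ)) (u : ℕ × ℕ) : ℤ :=
  if u.1 = u.2 then 0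
  else if u.2 < u.1 then (row Y u.1 : ℤ) - u.2
  else (col Y u.2 : ℤ) - u.1

set_option linter.unnecessarySeqFocus false

section AuxLemmas

lemma mem_row_iff {Y : Finset (ℕ × ℕ)} (hY : IsYoung Y) (i j : ℕ) :
    (i, j) ∈ Y ↔ 1 ≤ j ∧ j ≤ row Y i := by
  constructor
  · intro h
    refine ⟨(hY.1 _ h).2, ?_⟩
    have hsub : (Finset.Icc 1 j).image (fun j' => (i, j')) ⊆ Y.filter (fun p => p.1 = i) := by
      intro p hp
      simp only [mem_image, mem_Icc] at hp
      obtain ⟨j', ⟨h1, h2⟩, rfl⟩ := hp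
      simp only [mem_filter]
      exact ⟨hY.2 _ h (i, j') (hY.1 _ h).1 h1 le_rfl h2, trivial⟩
    have hcard := Finset.card_le_card hsub
    rw [Finset.card_image_of_injective _ (fun a b hab => by simpa using hab)] at hcard
    simpa [row, Nat.card_Icc] using hcard
  · rintro ⟨h1, h2⟩
    have hpos : 0 < row Y i := lt_of_lt_of_le h1 h2
    have hne : (Y.filter fun p => p.1 = i).Nonempty := Finset.card_pos.mp hpos
    obtain ⟨p, hp, hsup⟩ := Finset.exists_mem_eq_sup _ hne (fun p => p.2)
    simp only [mem_filter] at hp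
    have hle : row Y i ≤ p.2 := by
      have hsub2 : Y.filter (fun q => q.1 = i) ⊆ (Finset.Icc 1 p.2).image (fun j' => (i, j')) := by
        intro q hq
        have hmem := hq
        simp only [mem_filter] at hq
        simp only [mem_image, mem_Icc]
        refine ⟨q.2, ⟨(hY.1 _ hq.1).2, ?_⟩, by rw [← hq.2]⟩
        rw [← hsup]
        exact Finset.le_sup (f := fun p => p.2) hmem
      have := Finset.card_le_card hsub2
      calc row Y i ≤ ((Finset.Icc 1 p.2).image (fun j' => (i, j'))).card := this
        _ ≤ (Finset.Icc 1 p.2).card := Finset.card_image_le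
        _ = p.2 := by simp [Nat.card_Icc]
    have hpY : (i, p.2) ∈ Y := by
      have := hp.1
      rwa [← hp.2]
    exact hY.2 _ hpY (i, j) (hY.1 _ hpY).1 h1 le_rfl (le_trans h2 hle)

lemma mem_col_iff {Y : Finset (ℕ × ℕ)} (hY : IsYoung Y) (i j : ℕ) :
    (i, j) ∈ Y ↔ 1 ≤ i ∧ i ≤ col Y j := by
  constructor
  · intro h
    refine ⟨(hY.1 _ h).1, ?_⟩
    have hsub : (Finset.Icc 1 i).image (fun i' => (i', j)) ⊆ Y.filter (fun p => p.2 = j) := by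
      intro p hp
      simp only [mem_image, mem_Icc] at hp
      obtain ⟨i', ⟨h1, h2⟩, rfl⟩ := hp
      simp only [mem_filter]
      exact ⟨hY.2 _ h (i', j) h1 (hY.1 _ h).2 h2 le_rfl, trivial⟩
    have hcard := Finset.card_le_card hsub
    rw [Finset.card_image_of_injective _ (fun a b hab => by simpa using hab)] at hcard
    simpa [col, Nat.card_Icc] using hcard
  · rintro ⟨h1, h2⟩
    have hpos : 0 < col Y j := lt_of_lt_of_le h1 h2
    have hne : (Y.filter fun p => p.2 = j).Nonempty := Finset.card_pos.mp hpos
    obtain ⟨p, hp, hsup⟩ := Finset.exists_mem_eq_sup _ hne (fun p => p.1)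
    simp only [mem_filter] at hp
    have hle : col Y j ≤ p.1 := by
      have hsub2 : Y.filter (fun q => q.2 = j) ⊆ (Finset.Icc 1 p.1).image (fun i' => (i', j)) := by
        intro q hq
        have hmem := hq
        simp only [mem_filter] at hq
        simp only [mem_image, mem_Icc]
        refine ⟨q.1, ⟨(hY.1 _ hq.1).1, ?_⟩, by rw [← hq.2]⟩
        rw [← hsup]
        exact Finset.le_sup (f := fun p => p.1) hmem
      have := Finset.card_le_card hsub2
      calc col Y j ≤ ((Finset.Icc 1 p.1).image (fun i' => (i', j))).card := this
        _ ≤ (Finset.Icc 1 p.1).card := Finset.card_image_le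
        _ = p.1 := by simp [Nat.card_Icc]
    have hpY : (p.1, j) ∈ Y := by
      have := hp.1
      rwa [← hp.2]
    exact hY.2 _ hpY (i, j) h1 (hY.1 _ hpY).2 (le_trans h2 hle) le_rfl

lemma card_rects {Y : Finset (ℕ × ℕ)} (hY : IsYoung Y) :
    (rects Y).card = ∑ u ∈ Y, u.1 * u.2 := by
  have key : (rects Y).card = ∑ q ∈ Y, ((rects Y).filter fun pq => pq.2 = q).card :=
    Finset.card_eq_sum_card_fiberwise
      (fun pq hpq => (Finset.mem_product.mp (Finset.mem_filter.mp hpq).1).2)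
  rw [key]
  refine Finset.sum_congr rfl fun q hq => ?_
  have hset : (rects Y).filter (fun pq => pq.2 = q)
      = (Finset.Icc 1 q.1 ×ˢ Finset.Icc 1 q.2).image (fun p => (p, q)) := by
    ext pq
    simp only [rects, Finset.mem_filter, Finset.mem_product, Finset.mem_image, Finset.mem_Icc]
    constructor
    · rintro ⟨⟨⟨h1, h2⟩, h3, h4⟩, rfl⟩
      exact ⟨pq.1, ⟨⟨(hY.1 _ h1).1, h3⟩, ⟨(hY.1 _ h1).2, h4⟩⟩, rfl⟩
    · rintro ⟨p, ⟨⟨hp1, hp2⟩, hp3, hp4⟩, rfl⟩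
      exact ⟨⟨⟨hY.2 _ hq (p.1, p.2) hp1 hp3 hp2 hp4, hq⟩, hp2, hp4⟩, rfl⟩
  rw [hset, Finset.card_image_of_injective _ (fun a b hab => by simpa using hab)]
  simp [Nat.card_Icc]

lemma sum_arm {Y : Finset (ℕ × ℕ)} (hY : IsYoung Y) :
    ∑ u ∈ Y, ((row Y u.1 : ℤ) - u.2) = ∑ u ∈ Y, ((u.2 : ℤ) - 1) := by
  refine Finset.sum_nbij' (i := fun u => (u.1, row Y u.1 + 1 - u.2))
    (j := fun u => (u.1, row Y u.1 + 1 - u.2)) ?_ ?_ ?_ ?_ ?_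
  · intro u hu
    have h := (mem_row_iff hY u.1 u.2).mp (by rwa [Prod.mk.eta])
    exact (mem_row_iff hY u.1 _).mpr ⟨by omega, by omega⟩
  · intro u hu
    have h := (mem_row_iff hY u.1 u.2).mp (by rwa [Prod.mk.eta])
    exact (mem_row_iff hY u.1 _).mpr ⟨by omega, by omega⟩
  · intro u hu
    have h := (mem_row_iff hY u.1 u.2).mp (by rwa [Prod.mk.eta])
    ext <;> simp <;> omega
  · intro u hu
    have h := (mem_row_iff hY u.1 u.2).mp (by rwa [Prod.mk.eta])
    ext <;> simp <;> omega
  · intro u hu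
    have h := (mem_row_iff hY u.1 u.2).mp (by rwa [Prod.mk.eta])
    simp only []
    omega

lemma sum_leg {Y : Finset (ℕ × ℕ)} (hY : IsYoung Y) :
    ∑ u ∈ Y, ((col Y u.2 : ℤ) - u.1) = ∑ u ∈ Y, ((u.1 : ℤ) - 1) := by
  refine Finset.sum_nbij' (i := fun u => (col Y u.2 + 1 - u.1, u.2))
    (j := fun u => (col Y u.2 + 1 - u.1, u.2)) ?_ ?_ ?_ ?_ ?_
  · intro u hu
    have h := (mem_col_iff hY u.1 u.2).mp (by rwa [Prod.mk.eta])
    exact (mem_col_iff hY _ u.2).mpr ⟨by omega, by omega⟩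
  · intro u hu
    have h := (mem_col_iff hY u.1 u.2).mp (by rwa [Prod.mk.eta])
    exact (mem_col_iff hY _ u.2).mpr ⟨by omega, by omega⟩
  · intro u hu
    have h := (mem_col_iff hY u.1 u.2).mp (by rwa [Prod.mk.eta])
    ext <;> simp <;> omega
  · intro u hu
    have h := (mem_col_iff hY u.1 u.2).mp (by rwa [Prod.mk.eta])
    ext <;> simp <;> omega
  · intro u hu
    have h := (mem_col_iff hY u.1 u.2).mp (by rwa [Prod.mk.eta])
    simp only []
    omega

lemma sum_hk {Y : Finset (ℕ × ℕ)} (hY : IsYoung Y) :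
    ∑ u ∈ Y, hk Y u = ∑ u ∈ Y, ((u.1 : ℤ) + u.2 - 1) := by
  have h1 := sum_arm hY
  have h2 := sum_leg hY
  have : ∀ u : ℕ × ℕ, hk Y u
      = ((row Y u.1 : ℤ) - u.2) + ((col Y u.2 : ℤ) - u.1) + ((u.1 : ℤ) + u.2 - 1)
        - ((u.2 : ℤ) - 1) - ((u.1 : ℤ) - 1) := fun u => by unfold hk; ring
  calc ∑ u ∈ Y, hk Y u
      = ∑ u ∈ Y, (((row Y u.1 : ℤ) - u.2) + ((col Y u.2 : ℤ) - u.1) + ((u.1 : ℤ) + u.2 - 1)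
        - ((u.2 : ℤ) - 1) - ((u.1 : ℤ) - 1)) := Finset.sum_congr rfl fun u _ => this u
    _ = ∑ u ∈ Y, ((u.1 : ℤ) + u.2 - 1) := by
        rw [Finset.sum_sub_distrib, Finset.sum_sub_distrib, Finset.sum_add_distrib,
          Finset.sum_add_distrib, h1, h2]
        ring

lemma gauss_sum (m : ℕ) (a : ℤ) :
    ∑ j ∈ Finset.Icc 1 m, (a - 2 * (j : ℤ)) = m * a - m * m - m := by
  induction m with
  | zero => simp
  | succ n ih =>
    rw [Finset.sum_Icc_succ_top (Nat.succ_le_succ (Nat.zero_le n)), ih]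
    push_cast
    ring

lemma phk_sq_sum : ∀ Y : Finset (ℕ × ℕ), IsYoung Y →
    ∑ u ∈ Y, (phk Y u) ^ 2 = ∑ u ∈ Y, 2 * ((u.1 : ℤ) - 1) * ((u.2 : ℤ) - 1) := by
  intro Y
  induction Y using Finset.strongInductionOn with
  | _ Y IH =>
  intro hY
  rcases Y.eq_empty_or_nonempty with rfl | hne
  · simp
  -- the corner cell (r, c)
  set r := (Y.image Prod.fst).max' (hne.image _) with hrdef
  have hrmax : ∀ p ∈ Y, p.1 ≤ r := fun p hp => Finset.le_max' _ _ (Finset.mem_image_of_mem _ hp)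
  obtain ⟨p0, hp0Y, hp0⟩ := Finset.mem_image.mp (Finset.max'_mem (Y.image Prod.fst) (hne.image _))
  set c := row Y r with hcdef
  have hc1 : 1 ≤ c := by
    rw [← hrdef] at hp0
    have hmem : (r, p0.2) ∈ Y := by rw [← hp0]; rwa [Prod.mk.eta]
    have := (mem_row_iff hY r p0.2).mp hmem
    omega
  have hu : (r, c) ∈ Y := (mem_row_iff hY r c).mpr ⟨hc1, le_rfl⟩
  have hr1 : 1 ≤ r := (hY.1 _ hu).1
  have hcol : col Y c = r := by
    have h1 : r ≤ col Y c := ((mem_col_iff hY r c).mp hu).2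
    have h2 : col Y c ≤ r := by
      have : (col Y c, c) ∈ Y := (mem_col_iff hY (col Y c) c).mpr ⟨by omega, le_rfl⟩
      exact hrmax _ this
    omega
  set Y' := Y.erase (r, c) with hY'def
  have hssub : Y' ⊂ Y := Finset.erase_ssubset hu
  have hrowYc : ∀ j, (r, j) ∈ Y ↔ 1 ≤ j ∧ j ≤ c := fun j => mem_row_iff hY r j
  have hYoung' : IsYoung Y' := by
    constructor
    · exact fun p hp => hY.1 p (Finset.mem_of_mem_erase hp)
    · intro p hp q hq1 hq2 hq3 hq4
      have hpY := Finset.mem_of_mem_erase hp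
      have hqY := hY.2 p hpY q hq1 hq2 hq3 hq4
      refine Finset.mem_erase.mpr ⟨?_, hqY⟩
      rintro rfl
      have hp1 : p.1 = r := le_antisymm (hrmax p hpY) hq3
      have hp2 : p.2 ≤ c := by
        have := (mem_row_iff hY p.1 p.2).mp (by rwa [Prod.mk.eta])
        rw [hp1] at this
        omega
      have : p = (r, c) := Prod.ext hp1 (le_antisymm hp2 hq4)
      exact (Finset.mem_erase.mp hp).1 this
  -- rows and columns of Y'
  have hfe : ∀ (P : ℕ × ℕ → Prop) [DecidablePred P],
      Y'.filter P = (Y.filter P).erase (r, c) := fun P _ => Finset.filter_erase _ _ _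
  have hrowr : row Y' r = c - 1 := by
    have : (r, c) ∈ Y.filter fun p => p.1 = r := Finset.mem_filter.mpr ⟨hu, rfl⟩
    rw [row, hfe, Finset.card_erase_of_mem this]
    rfl
  have hrowi : ∀ i, i ≠ r → row Y' i = row Y i := by
    intro i hi
    rw [row, hfe, Finset.erase_eq_of_notMem, row]
    simp only [Finset.mem_filter]
    rintro ⟨-, h⟩
    exact hi h.symm
  have hcolc : col Y' c = r - 1 := by
    have : (r, c) ∈ Y.filter fun p => p.2 = c := Finset.mem_filter.mpr ⟨hu, rfl⟩
    rw [col, hfe, Finset.card_erase_of_mem this, ← hcol]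
    rfl
  have hcolj : ∀ j, j ≠ c → col Y' j = col Y j := by
    intro j hj
    rw [col, hfe, Finset.erase_eq_of_notMem, col]
    simp only [Finset.mem_filter]
    rintro ⟨-, h⟩
    exact hj h.symm
  set m := min (c - 1) (r - 1) with hmdef
  set S1 : Finset (ℕ × ℕ) := (Finset.Icc 1 m).image (fun j => (r, j)) with hS1def
  set S2 : Finset (ℕ × ℕ) := (Finset.Icc 1 m).image (fun i => (i, c)) with hS2def
  have hS1sub : S1 ⊆ Y' := by
    intro p hp
    simp only [hS1def, Finset.mem_image, Finset.mem_Icc] at hp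
    obtain ⟨j, ⟨hj1, hj2⟩, rfl⟩ := hp
    refine Finset.mem_erase.mpr ⟨?_, (mem_row_iff hY r j).mpr ⟨hj1, by omega⟩⟩
    intro h
    have : j = c := (Prod.mk.injEq _ _ _ _ ▸ h).2
    omega
  have hS2sub : S2 ⊆ Y' := by
    intro p hp
    simp only [hS2def, Finset.mem_image, Finset.mem_Icc] at hp
    obtain ⟨i, ⟨hi1, hi2⟩, rfl⟩ := hp
    refine Finset.mem_erase.mpr ⟨?_, (mem_col_iff hY i c).mpr ⟨hi1, by omega⟩⟩
    intro h
    have : i = r := (Prod.mk.injEq _ _ _ _ ▸ h).1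
    omega
  have hdisj : Disjoint S1 S2 := by
    rw [Finset.disjoint_left]
    intro p hp1 hp2
    simp only [hS1def, hS2def, Finset.mem_image, Finset.mem_Icc] at hp1 hp2
    obtain ⟨j, ⟨hj1, hj2⟩, rfl⟩ := hp1
    obtain ⟨i, ⟨hi1, hi2⟩, he⟩ := hp2
    have : i = r ∧ c = j := Prod.mk.injEq _ _ _ _ ▸ he
    omega
  -- the corner has zero partial hook
  have hphk0 : phk Y (r, c) = 0 := by
    unfold phk
    simp only
    split_ifs with h1 h2
    · rfl
    · rw [← hcdef]; simp
    · rw [hcol]; simp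
  -- phk agrees off S1 ∪ S2
  have hagree : ∀ v ∈ Y', v ∉ S1 ∪ S2 → (phk Y v) ^ 2 - (phk Y' v) ^ 2 = 0 := by
    intro v hv hns
    rw [Finset.mem_union] at hns
    push_neg at hns
    have hvY := Finset.mem_of_mem_erase hv
    have heq : phk Y v = phk Y' v := by
      unfold phk
      split_ifs with h1 h2
      · rfl
      · -- v.2 < v.1, uses row v.1
        have hv1r : v.1 ≠ r := by
          intro hvr
          apply hns.1
          simp only [hS1def, Finset.mem_image, Finset.mem_Icc]
          refine ⟨v.2, ⟨(hY.1 _ hvY).2, ?_⟩, by rw [← hvr, Prod.mk.eta]⟩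
          have hjc : v.2 ≤ c := by
            have := (mem_row_iff hY v.1 v.2).mp (by rwa [Prod.mk.eta])
            rw [hvr] at this; omega
          have hjnec : v.2 ≠ c := by
            intro hc
            exact (Finset.mem_erase.mp hv).1 (Prod.ext hvr hc)
          omega
        rw [hrowi _ hv1r]
      · -- v.1 < v.2, uses col v.2
        have hv2c : v.2 ≠ c := by
          intro hvc
          apply hns.2
          simp only [hS2def, Finset.mem_image, Finset.mem_Icc]
          refine ⟨v.1, ⟨(hY.1 _ hvY).1, ?_⟩, by rw [← hvc, Prod.mk.eta]⟩
          have hir : v.1 ≤ r := hrmax _ hvY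
          have hiner : v.1 ≠ r := by
            intro hirr
            exact (Finset.mem_erase.mp hv).1 (Prod.ext hirr hvc)
          omega
        rw [hcolj _ hv2c]
    rw [heq, sub_self]
  -- sums over S1, S2
  have hS1val : ∑ v ∈ S1, ((phk Y v) ^ 2 - (phk Y' v) ^ 2)
      = ∑ j ∈ Finset.Icc 1 m, ((2 * (c : ℤ) - 1) - 2 * (j : ℤ)) := by
    rw [hS1def, Finset.sum_image (fun a _ b _ hab => by simpa using hab)]
    refine Finset.sum_congr rfl fun j hj => ?_
    rw [Finset.mem_Icc] at hj
    have h1 : phk Y (r, j) = (c : ℤ) - j := by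
      unfold phk
      simp only
      rw [if_neg (by omega), if_pos (by omega), ← hcdef]
    have h2 : phk Y' (r, j) = ((c : ℤ) - 1) - j := by
      unfold phk
      simp only
      rw [if_neg (by omega), if_pos (by omega), hrowr]
      have : ((c - 1 : ℕ) : ℤ) = (c : ℤ) - 1 := by omega
      rw [this]
    rw [h1, h2]; ring
  have hS2val : ∑ v ∈ S2, ((phk Y v) ^ 2 - (phk Y' v) ^ 2)
      = ∑ i ∈ Finset.Icc 1 m, ((2 * (r : ℤ) - 1) - 2 * (i : ℤ)) := by
    rw [hS2def, Finset.sum_image (fun a _ b _ hab => by simpa using hab)]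
    refine Finset.sum_congr rfl fun i hi => ?_
    rw [Finset.mem_Icc] at hi
    have h1 : phk Y (i, c) = (r : ℤ) - i := by
      unfold phk
      simp only
      rw [if_neg (by omega), if_neg (by omega), hcol]
    have h2 : phk Y' (i, c) = ((r : ℤ) - 1) - i := by
      unfold phk
      simp only
      rw [if_neg (by omega), if_neg (by omega), hcolc]
      have : ((r - 1 : ℕ) : ℤ) = (r : ℤ) - 1 := by omega
      rw [this]
    rw [h1, h2]; ring
  -- put it together
  have hIH := IH Y' hssub hYoung'
  have hstep1 : ∑ u ∈ Y, (phk Y u) ^ 2 = ∑ u ∈ Y', (phk Y u) ^ 2 := by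
    rw [← Finset.sum_erase_add _ _ hu, hphk0]
    ring
  have hstep2 : ∑ u ∈ Y', (phk Y u) ^ 2 - ∑ u ∈ Y', (phk Y' u) ^ 2
      = ∑ u ∈ Y', ((phk Y u) ^ 2 - (phk Y' u) ^ 2) := (Finset.sum_sub_distrib _ _).symm
  have hstep3 : ∑ u ∈ Y', ((phk Y u) ^ 2 - (phk Y' u) ^ 2)
      = ∑ u ∈ S1 ∪ S2, ((phk Y u) ^ 2 - (phk Y' u) ^ 2) :=
    (Finset.sum_subset (Finset.union_subset hS1sub hS2sub) hagree).symm
  have hstep4 : ∑ u ∈ S1 ∪ S2, ((phk Y u) ^ 2 - (phk Y' u) ^ 2)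
      = 2 * ((r : ℤ) - 1) * ((c : ℤ) - 1) := by
    rw [Finset.sum_union hdisj, hS1val, hS2val, gauss_sum, gauss_sum]
    have hm : (m : ℤ) = min ((c : ℤ) - 1) ((r : ℤ) - 1) := by omega
    rcases le_total c r with h | h
    · have : (m : ℤ) = (c : ℤ) - 1 := by omega
      rw [this]; ring
    · have : (m : ℤ) = (r : ℤ) - 1 := by omega
      rw [this]; ring
  have hstep5 : ∑ u ∈ Y, 2 * ((u.1 : ℤ) - 1) * ((u.2 : ℤ) - 1)
      = ∑ u ∈ Y', 2 * ((u.1 : ℤ) - 1) * ((u.2 : ℤ) - 1)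
        + 2 * ((r : ℤ) - 1) * ((c : ℤ) - 1) := by
    rw [← Finset.sum_erase_add _ _ hu]
  rw [hstep1, hstep5, ← hIH]
  have := hstep2
  rw [hstep3, hstep4] at this
  linarith

end AuxLemmas

theorem card_rects_eq_hook_add_half (Y : Finset (ℕ × ℕ)) (hY : IsYoung Y) :
    2 * ((rects Y).card : ℤ) = 2 * ∑ u ∈ Y, hk Y u + ∑ u ∈ Y, (phk Y u) ^ 2 := by
  rw [sum_hk hY, phk_sq_sum Y hY]
  have hcast : ((rects Y).card : ℤ) = ∑ u ∈ Y, (u.1 : ℤ) * u.2 := by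
    rw [card_rects hY]
    push_cast
    rfl
  rw [hcast, Finset.mul_sum, Finset.mul_sum, ← Finset.sum_add_distrib]
  exact Finset.sum_congr rfl fun u _ => by ring
end
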